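/- arXiv:2103.10172 — 11 statements merged into one kernel-verified Lean document; each statement's English description precedes it below -/
import Mathlib

section
/- If G is a finite simple graph with at least one edge and x is a vertex of G that is not isolated, then there exists a Z-Grundy dominating sequence of G (that is, a Z-sequence of maximum length) whose set of vertices contains x. -/
/-- A Z-sequence in a graph `G`: a list of distinct vertices such that each vertex
has a neighbor not contained in the closed neighborhood of any earlier vertex. -/
def IsZSeq {V : Type*} (G : SimpleGraph V) (l : List V) : Prop :=
  l.Nodup ∧ ∀ i : Fin l.length, ∃ w : V, G.Adj (l.get i) w ∧
    ∀ j : Fin l.length, (j : ℕ) < (i : ℕ) → w ≠ l.get j ∧ ¬ G.Adj (l.get j) w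

/-- A Z-Grundy dominating sequence: a Z-sequence of maximum length. -/
def IsZGrundySeq {V : Type*} (G : SimpleGraph V) (l : List V) : Prop :=
  IsZSeq G l ∧ ∀ l' : List V, IsZSeq G l' → l'.length ≤ l.length

/-- From witness data, build a Z-sequence as `List.ofFn`. -/
lemma isZSeq_ofFn {V : Type*} (G : SimpleGraph V) {k : ℕ} (v w : Fin k → V)
    (hv : Function.Injective v)
    (h1 : ∀ i, G.Adj (v i) (w i))
    (h2 : ∀ i j : Fin k, (j : ℕ) < (i : ℕ) → w i ≠ v j ∧ ¬ G.Adj (v j) (w i)) :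
    IsZSeq G (List.ofFn v) := by
  refine ⟨List.nodup_ofFn.mpr hv, ?_⟩
  intro i
  refine ⟨w (Fin.cast (by simp) i), ?_, ?_⟩
  · rw [List.get_ofFn]
    exact h1 _
  · intro j hj
    rw [List.get_ofFn]
    exact h2 (Fin.cast (by simp) i) (Fin.cast (by simp) j) hj

/-- witnesses are pairwise distinct -/
lemma witness_inj {V : Type*} (G : SimpleGraph V) {k : ℕ} (v w : Fin k → V)
    (h1 : ∀ i, G.Adj (v i) (w i))
    (h2 : ∀ i j : Fin k, (j : ℕ) < (i : ℕ) → w i ≠ v j ∧ ¬ G.Adj (v j) (w i)) :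
    Function.Injective w := by
  intro i j hij
  rcases lt_trichotomy (i : ℕ) (j : ℕ) with h | h | h
  · exact absurd (by rw [← hij]; exact h1 i) (h2 j i h).2
  · exact Fin.ext h
  · exact absurd (by rw [hij]; exact h1 j) (h2 i j h).2

/-- reversal: the reversed witness list is also a Z-sequence -/
lemma isZSeq_rev {V : Type*} (G : SimpleGraph V) {k : ℕ} (v w : Fin k → V)
    (h1 : ∀ i, G.Adj (v i) (w i))
    (h2 : ∀ i j : Fin k, (j : ℕ) < (i : ℕ) → w i ≠ v j ∧ ¬ G.Adj (v j) (w i)) :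
    IsZSeq G (List.ofFn (fun a : Fin k => w a.rev)) := by
  apply isZSeq_ofFn G _ (fun a : Fin k => v a.rev)
  · exact (witness_inj G v w h1 h2).comp (Fin.rev_injective)
  · intro a; exact (h1 a.rev).symm
  · intro a b hab
    have h' : b < a := hab
    have hba : (a.rev : ℕ) < (b.rev : ℕ) := Fin.lt_def.mp (Fin.rev_lt_rev.mpr h')
    obtain ⟨hne, hadj⟩ := h2 b.rev a.rev hba
    exact ⟨fun h => hne h.symm, fun h => hadj h.symm⟩

lemma exists_isZGrundySeq {V : Type*} [Fintype V] (G : SimpleGraph V) :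
    ∃ l : List V, IsZGrundySeq G l := by
  classical
  set P : ℕ → Prop := fun m => ∃ l : List V, IsZSeq G l ∧ l.length = m with hP
  have h0 : P 0 := ⟨[], ⟨List.nodup_nil, fun i => (Nat.not_lt_zero _ i.2).elim⟩, rfl⟩
  have hspec : P (Nat.findGreatest P (Fintype.card V)) :=
    Nat.findGreatest_spec (Nat.zero_le _) h0
  obtain ⟨l, hl, hlen⟩ := hspec
  refine ⟨l, hl, fun l' hl' => ?_⟩
  have h1 : P l'.length := ⟨l', hl', rfl⟩
  have := Nat.le_findGreatest hl'.1.length_le_card h1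
  omega

/-- If `G` is a finite graph with at least one edge and `x` is a non-isolated vertex,
then some Z-Grundy dominating sequence contains `x`. -/
theorem exists_ZGrundySeq_containing {V : Type*} [Fintype V] (G : SimpleGraph V)
    (hG : G.edgeSet.Nonempty) (x : V) (hx : ∃ y : V, G.Adj x y) :
    ∃ l : List V, IsZGrundySeq G l ∧ x ∈ l := by
  classical
  obtain ⟨l, hl⟩ := exists_isZGrundySeq G
  by_cases hxl : x ∈ l
  · exact ⟨l, hl, hxl⟩
  choose w hw1 hw2 using hl.1.2
  by_cases hA : ∃ i : Fin l.length, G.Adj x (l.get i)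
  · -- some vertex of l is adjacent to x: replace the earliest one's witness by x, reverse
    set Q : ℕ → Prop := fun m => ∃ h : m < l.length, G.Adj x (l.get ⟨m, h⟩) with hQ
    have hQex : ∃ m, Q m := by
      obtain ⟨i, hi⟩ := hA
      exact ⟨(i : ℕ), i.2, by simpa using hi⟩
    set i₀ : Fin l.length := ⟨Nat.find hQex, (Nat.find_spec hQex).1⟩ with hi₀
    have hadj₀ : G.Adj x (l.get i₀) := (Nat.find_spec hQex).2
    have hmin : ∀ t : Fin l.length, (t : ℕ) < (i₀ : ℕ) → ¬ G.Adj x (l.get t) := by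
      intro t ht hadj
      exact Nat.find_min hQex ht ⟨t.2, by simpa using hadj⟩
    set w' : Fin l.length → V := fun j => if j = i₀ then x else w j with hw'
    have h1' : ∀ j, G.Adj (l.get j) (w' j) := by
      intro j
      by_cases hj : j = i₀
      · simp only [hw', if_pos hj, hj]; exact hadj₀.symm
      · simp only [hw', if_neg hj]; exact hw1 j
    have h2' : ∀ j t : Fin l.length, (t : ℕ) < (j : ℕ) →
        w' j ≠ l.get t ∧ ¬ G.Adj (l.get t) (w' j) := by
      intro j t ht
      by_cases hj : j = i₀
      · subst hj
        simp only [hw', if_pos rfl]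
        refine ⟨fun h => hxl (h ▸ l.get_mem t), fun h => hmin t ht h.symm⟩
      · simp only [hw', if_neg hj]
        exact hw2 j t ht
    refine ⟨List.ofFn (fun a : Fin l.length => w' a.rev), ⟨isZSeq_rev G _ w' h1' h2', ?_⟩, ?_⟩
    · intro l' hl'
      have := hl.2 l' hl'
      simpa using this
    · rw [List.mem_ofFn]
      exact ⟨i₀.rev, by simp [hw', Fin.rev_rev]⟩
  · -- no vertex of l is adjacent to x: append a neighbor of x, contradiction
    exfalso
    obtain ⟨y, hxy⟩ := hx
    have hyl : y ∉ l := by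
      intro hy
      obtain ⟨i, hi⟩ := List.mem_iff_get.mp hy
      exact hA ⟨i, hi ▸ hxy⟩
    set v2 : Fin (l.length + 1) → V := Fin.snoc (fun i => l.get i) y with hv2
    set w2 : Fin (l.length + 1) → V := Fin.snoc w x with hw2'
    have hv2inj : Function.Injective v2 := by
      have hg : Function.Injective fun i : Fin l.length => l.get i :=
        List.nodup_iff_injective_get.mp hl.1.1
      intro a b hab
      induction a using Fin.lastCases with
      | last =>
        induction b using Fin.lastCases with
        | last => rfl
        | cast b =>
          exfalso
          simp only [hv2, Fin.snoc_last, Fin.snoc_castSucc] at hab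
          exact hyl (hab ▸ l.get_mem b)
      | cast a =>
        induction b using Fin.lastCases with
        | last =>
          exfalso
          simp only [hv2, Fin.snoc_last, Fin.snoc_castSucc] at hab
          exact hyl (hab ▸ l.get_mem a)
        | cast b =>
          simp only [hv2, Fin.snoc_castSucc] at hab
          exact congrArg Fin.castSucc (hg hab)
    have h1'' : ∀ i, G.Adj (v2 i) (w2 i) := by
      intro i
      induction i using Fin.lastCases with
      | last => simp only [hv2, hw2', Fin.snoc_last]; exact hxy.symm
      | cast i => simp only [hv2, hw2', Fin.snoc_castSucc]; exact hw1 i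
    have h2'' : ∀ i j : Fin (l.length + 1), (j : ℕ) < (i : ℕ) →
        w2 i ≠ v2 j ∧ ¬ G.Adj (v2 j) (w2 i) := by
      intro i j hij
      induction j using Fin.lastCases with
      | last =>
        exfalso
        have := i.2
        simp only [Fin.val_last] at hij
        omega
      | cast j =>
        induction i using Fin.lastCases with
        | last =>
          simp only [hv2, hw2', Fin.snoc_last, Fin.snoc_castSucc]
          refine ⟨fun h => hxl (h ▸ l.get_mem j), fun h => hA ⟨j, h.symm⟩⟩
        | cast i =>
          simp only [hv2, hw2', Fin.snoc_castSucc]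
          refine hw2 i j ?_
          simpa using hij
    have hz : IsZSeq G (List.ofFn v2) := isZSeq_ofFn G v2 w2 hv2inj h1'' h2''
    have := hl.2 _ hz
    simp at this
end

section
/- A finite simple graph G has exactly one minimum zero forcing set if and only if G has no edges. -/
/-- The set of vertices that eventually become active in the zero forcing process
started from the set `S`: an active vertex whose neighbors, except exactly one,
are all active, forces the remaining one to become active. -/
inductive ZFClosed {V : Type*} (G : SimpleGraph V) (S : Set V) : V → Prop
  | init (v : V) (hv : v ∈ S) : ZFClosed G S v
  | force (u v : V) (hu : ZFClosed G S u) (huv : G.Adj u v)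
      (hrest : ∀ w : V, G.Adj u w → w ≠ v → ZFClosed G S w) : ZFClosed G S v

/-- `S` is a zero forcing set of `G` if the zero forcing process started at `S`
activates all vertices. -/
def IsZeroForcingSet {V : Type*} (G : SimpleGraph V) (S : Set V) : Prop :=
  ∀ v : V, ZFClosed G S v

/-- A minimum zero forcing set: a zero forcing set of minimum cardinality. -/
def IsMinZeroForcingSet {V : Type*} (G : SimpleGraph V) (S : Set V) : Prop :=
  IsZeroForcingSet G S ∧ ∀ S' : Set V, IsZeroForcingSet G S' → S.ncard ≤ S'.ncard

section ZFAux

open Set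

variable {V : Type*}

/-- First coordinates of a list of forces, as a set. -/
def ZFfsts (L : List (V × V)) : Set V := {x | ∃ p ∈ L, p.1 = x}

/-- Second coordinates of a list of forces, as a set. -/
def ZFsnds (L : List (V × V)) : Set V := {x | ∃ p ∈ L, p.2 = x}

@[simp] lemma ZFfsts_nil : ZFfsts ([] : List (V × V)) = ∅ := by simp [ZFfsts]

@[simp] lemma ZFsnds_nil : ZFsnds ([] : List (V × V)) = ∅ := by simp [ZFsnds]

@[simp] lemma ZFfsts_cons (p : V × V) (L : List (V × V)) :
    ZFfsts (p :: L) = insert p.1 (ZFfsts L) := by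
  ext x
  simp only [ZFfsts, Set.mem_setOf_eq, Set.mem_insert_iff]
  constructor
  · rintro ⟨q, hq, rfl⟩
    rcases List.mem_cons.mp hq with rfl | hq
    · exact Or.inl rfl
    · exact Or.inr ⟨q, hq, rfl⟩
  · rintro (rfl | ⟨q, hq, rfl⟩)
    · exact ⟨p, List.mem_cons_self, rfl⟩
    · exact ⟨q, List.mem_cons_of_mem p hq, rfl⟩

@[simp] lemma ZFsnds_cons (p : V × V) (L : List (V × V)) :
    ZFsnds (p :: L) = insert p.2 (ZFsnds L) := by
  ext x
  simp only [ZFsnds, Set.mem_setOf_eq, Set.mem_insert_iff]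
  constructor
  · rintro ⟨q, hq, rfl⟩
    rcases List.mem_cons.mp hq with rfl | hq
    · exact Or.inl rfl
    · exact Or.inr ⟨q, hq, rfl⟩
  · rintro (rfl | ⟨q, hq, rfl⟩)
    · exact ⟨p, List.mem_cons_self, rfl⟩
    · exact ⟨q, List.mem_cons_of_mem p hq, rfl⟩

@[simp] lemma ZFfsts_append (M N : List (V × V)) :
    ZFfsts (M ++ N) = ZFfsts M ∪ ZFfsts N := by
  ext x; simp only [ZFfsts, List.mem_append, Set.mem_setOf_eq, Set.mem_union]
  constructor
  · rintro ⟨p, hp | hp, rfl⟩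
    · exact Or.inl ⟨p, hp, rfl⟩
    · exact Or.inr ⟨p, hp, rfl⟩
  · rintro (⟨p, hp, rfl⟩ | ⟨p, hp, rfl⟩)
    · exact ⟨p, Or.inl hp, rfl⟩
    · exact ⟨p, Or.inr hp, rfl⟩

/-- A valid chronological sequence of forces starting from active set `A`. -/
def ZFValid (G : SimpleGraph V) : Set V → List (V × V) → Prop
  | _, [] => True
  | A, p :: L => p.1 ∈ A ∧ p.2 ∉ A ∧ G.Adj p.1 p.2 ∧
      (∀ w, G.Adj p.1 w → w ≠ p.2 → w ∈ A) ∧ ZFValid G (insert p.2 A) L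

lemma ZFClosed_trans {G : SimpleGraph V} {A B : Set V} (hB : ∀ y ∈ B, ZFClosed G A y)
    {x : V} (hx : ZFClosed G B x) : ZFClosed G A x := by
  induction hx with
  | init v hv => exact hB v hv
  | force u v hu huv hrest ihu ihrest =>
      exact ZFClosed.force u v ihu huv ihrest

lemma ZFClosed_mono {G : SimpleGraph V} {A B : Set V} (hAB : A ⊆ B) {x : V}
    (hx : ZFClosed G A x) : ZFClosed G B x :=
  ZFClosed_trans (fun y hy => ZFClosed.init y (hAB hy)) hx

lemma closed_of_valid {G : SimpleGraph V} :
    ∀ (L : List (V × V)) (A : Set V), ZFValid G A L →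
      ∀ x ∈ A ∪ ZFsnds L, ZFClosed G A x := by
  intro L
  induction L with
  | nil => intro A _ x hx; simp at hx; exact ZFClosed.init x hx
  | cons p L ih =>
      intro A h x hx
      obtain ⟨h1, h2, h3, h4, h5⟩ := h
      have hp2 : ZFClosed G A p.2 :=
        ZFClosed.force p.1 p.2 (ZFClosed.init _ h1) h3
          (fun w hw hwp => ZFClosed.init w (h4 w hw hwp))
      have hx' : x ∈ insert p.2 A ∪ ZFsnds L := by
        simp at hx ⊢; tauto
      have := ih (insert p.2 A) h5 x hx'
      refine ZFClosed_trans ?_ this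
      intro y hy
      rcases hy with rfl | hy
      · exact hp2
      · exact ZFClosed.init y hy

lemma snds_not_mem {G : SimpleGraph V} :
    ∀ (L : List (V × V)) (A : Set V), ZFValid G A L → ∀ p ∈ L, p.2 ∉ A := by
  intro L
  induction L with
  | nil => intro A _ p hp; simp at hp
  | cons q L ih =>
      intro A h p hp
      obtain ⟨h1, h2, h3, h4, h5⟩ := h
      rcases List.mem_cons.mp hp with rfl | hp
      · exact h2
      · intro hpA
        exact ih (insert q.2 A) h5 p hp (Set.mem_insert_iff.mpr (Or.inr hpA))

lemma mem_facts {G : SimpleGraph V} :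
    ∀ (L : List (V × V)) (A : Set V), ZFValid G A L → ∀ p ∈ L,
      p.1 ∈ A ∪ ZFsnds L ∧ G.Adj p.1 p.2 ∧
        (∀ w, G.Adj p.1 w → w ≠ p.2 → w ∈ A ∪ ZFsnds L) := by
  intro L
  induction L with
  | nil => intro A _ p hp; simp at hp
  | cons q L ih =>
      intro A h p hp
      obtain ⟨h1, h2, h3, h4, h5⟩ := h
      have hsub : insert q.2 A ∪ ZFsnds L ⊆ A ∪ ZFsnds (q :: L) := by
        intro x hx; simp at hx ⊢; tauto
      rcases List.mem_cons.mp hp with rfl | hp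
      · refine ⟨?_, h3, ?_⟩
        · exact Or.inl h1
        · intro w hw hwp; exact Or.inl (h4 w hw hwp)
      · obtain ⟨ha, hb, hc⟩ := ih (insert q.2 A) h5 p hp
        exact ⟨hsub ha, hb, fun w hw hwp => hsub (hc w hw hwp)⟩

lemma fst_not_fsts {G : SimpleGraph V} {A : Set V} {p : V × V} {L : List (V × V)}
    (h : ZFValid G A (p :: L)) : p.1 ∉ ZFfsts L := by
  obtain ⟨h1, h2, h3, h4, h5⟩ := h
  rintro ⟨q, hq, hq1⟩
  -- q = (p.1, q.2) ∈ L; all neighbors of p.1 are in insert p.2 A after the head step,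
  -- but q.2 is a neighbor of p.1 not in insert p.2 A.
  have hadj : G.Adj p.1 q.2 := by rw [← hq1] at *; exact (mem_facts L _ h5 q hq).2.1
  have hq2 : q.2 ∉ insert p.2 A := snds_not_mem L _ h5 q hq
  have : q.2 ∈ insert p.2 A := by
    by_cases hqp : q.2 = p.2
    · exact Set.mem_insert_iff.mpr (Or.inl hqp)
    · exact Set.mem_insert_iff.mpr (Or.inr (h4 q.2 hadj hqp))
  exact hq2 this

lemma ncard_fsts [Finite V] {G : SimpleGraph V} :
    ∀ (L : List (V × V)) (A : Set V), ZFValid G A L →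
      (ZFfsts L).ncard = L.length := by
  intro L
  induction L with
  | nil => intro A _; simp
  | cons p L ih =>
      intro A h
      have h5 := h.2.2.2.2
      rw [ZFfsts_cons, Set.ncard_insert_of_notMem (fst_not_fsts h) (Set.toFinite _),
        ih _ h5]
      simp

lemma ncard_snds_le [Finite V] (L : List (V × V)) :
    (ZFsnds L).ncard ≤ L.length := by
  induction L with
  | nil => simp
  | cons p L ih =>
      rw [ZFsnds_cons]
      calc (insert p.2 (ZFsnds L)).ncard ≤ (ZFsnds L).ncard + 1 :=
            Set.ncard_insert_le _ _
        _ ≤ L.length + 1 := by omega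
        _ = (p :: L).length := by simp

lemma valid_append {G : SimpleGraph V} :
    ∀ (M N : List (V × V)) (A : Set V),
      ZFValid G A (M ++ N) ↔ ZFValid G A M ∧ ZFValid G (A ∪ ZFsnds M) N := by
  intro M
  induction M with
  | nil =>
      intro N A; simp [ZFValid]
  | cons p M ih =>
      intro N A
      have hset : insert p.2 A ∪ ZFsnds M = A ∪ ZFsnds (p :: M) := by
        ext x; simp; tauto
      constructor
      · rintro ⟨h1, h2, h3, h4, h5⟩
        rw [show M.append N = M ++ N from rfl, ih, hset] at h5
        exact ⟨⟨h1, h2, h3, h4, h5.1⟩, h5.2⟩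
      · rintro ⟨⟨h1, h2, h3, h4, h5⟩, h6⟩
        refine ⟨h1, h2, h3, h4, ?_⟩
        rw [show M.append N = M ++ N from rfl, ih, hset]
        exact ⟨h5, h6⟩

lemma valid_reverse {G : SimpleGraph V} :
    ∀ (L : List (V × V)) (A : Set V), ZFValid G A L →
      ZFValid G (univ \ ZFfsts L) (L.reverse.map Prod.swap) := by
  intro L
  induction L using List.reverseRecOn with
  | nil => intro A _; simp [ZFValid]
  | append_singleton L p ih =>
      intro A h
      rw [valid_append] at h
      obtain ⟨h1, h2⟩ := h
      obtain ⟨hu, hv, huv, hrest, -⟩ := h2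
      set B := A ∪ ZFsnds L with hB
      have hfsts : ZFfsts (L ++ [p]) = insert p.1 (ZFfsts L) := by
        ext x; simp [Set.union_comm]
      have hvB : p.2 ∉ B := hv
      -- p.2 is not a forcer in L
      have hv_not_fst : p.2 ∉ ZFfsts L := by
        rintro ⟨q, hq, hq1⟩
        exact hvB (by rw [← hq1] at *; exact (mem_facts L _ h1 q hq).1)
      -- neighbors of p.2 other than p.1 are not forcers in L
      have hnbr : ∀ w, G.Adj p.2 w → w ≠ p.1 → w ∉ ZFfsts L := by
        intro w hw hwp
        rintro ⟨q, hq, hq1⟩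
        obtain ⟨-, -, hc⟩ := mem_facts L _ h1 q hq
        have hq2B : q.2 ∈ B := by
          have : q.2 ∈ ZFsnds L := ⟨q, hq, rfl⟩
          exact Or.inr this
        have hne : p.2 ≠ q.2 := fun hh => hvB (hh ▸ hq2B)
        have : G.Adj q.1 p.2 := by rw [hq1]; exact hw.symm
        exact hvB (hc p.2 this hne)
      -- p.1 is not a forcer in L
      have hu_not_fst : p.1 ∉ ZFfsts L := by
        rintro ⟨q, hq, hq1⟩
        obtain ⟨-, -, hc⟩ := mem_facts L _ h1 q hq
        have hq2B : q.2 ∈ B := Or.inr ⟨q, hq, rfl⟩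
        have hne : p.2 ≠ q.2 := fun hh => hvB (hh ▸ hq2B)
        have : G.Adj q.1 p.2 := by rw [hq1]; exact huv
        exact hvB (hc p.2 this hne)
      have hrev : (L ++ [p]).reverse.map Prod.swap
          = (p.2, p.1) :: L.reverse.map Prod.swap := by simp [Prod.swap]
      rw [hrev, hfsts]
      refine ⟨?_, ?_, huv.symm, ?_, ?_⟩
      · -- p.2 ∈ univ \ insert p.1 (ZFfsts L)
        simp only [Set.mem_diff, Set.mem_univ, true_and, Set.mem_insert_iff]
        push_neg
        exact ⟨huv.ne', hv_not_fst⟩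
      · -- p.1 ∉ univ \ insert p.1 (ZFfsts L)
        simp
      · intro w hw hwp
        simp only [Set.mem_diff, Set.mem_univ, true_and, Set.mem_insert_iff]
        push_neg
        exact ⟨hwp, hnbr w hw hwp⟩
      · have hset : insert p.1 (univ \ insert p.1 (ZFfsts L)) = univ \ ZFfsts L := by
          ext x
          simp only [Set.mem_insert_iff, Set.mem_diff, Set.mem_univ, true_and]
          constructor
          · rintro (rfl | h)
            · exact hu_not_fst
            · exact fun hx => h (Or.inr hx)
          · intro hx
            by_cases hxp : x = p.1
            · exact Or.inl hxp
            · exact Or.inr (fun hc => hc.elim hxp hx)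
        rw [hset]
        exact ih A h1

lemma exists_applicable {G : SimpleGraph V} {A : Set V} (hne : A ≠ univ)
    (hcl : ∀ x, ZFClosed G A x) :
    ∃ u v, u ∈ A ∧ v ∉ A ∧ G.Adj u v ∧ ∀ w, G.Adj u w → w ≠ v → w ∈ A := by
  by_contra hcon
  push_neg at hcon
  have hAll : ∀ x, ZFClosed G A x → x ∈ A := by
    intro x hx
    induction hx with
    | init v hv => exact hv
    | force u v hu huv hrest ihu ihrest =>
        by_contra hv
        obtain ⟨w, hw, hwv, hwA⟩ := hcon u v ihu hv huv
        exact hwA (ihrest w hw hwv)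
  exact hne (Set.eq_univ_of_forall fun x => hAll x (hcl x))

lemma exists_seq [Fintype V] {G : SimpleGraph V} :
    ∀ (n : ℕ) (A : Set V), (Aᶜ).ncard ≤ n → (∀ x, ZFClosed G A x) →
      ∃ L, ZFValid G A L ∧ A ∪ ZFsnds L = univ := by
  intro n
  induction n with
  | zero =>
      intro A h _
      have hAc : Aᶜ = ∅ := by
        rw [← Set.ncard_eq_zero (Set.toFinite _)] at *
        omega
      have hA : A = univ := by
        rw [← Set.compl_empty, ← hAc, compl_compl]
      exact ⟨[], trivial, by simp [hA]⟩
  | succ n ih =>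
      intro A h hcl
      by_cases hA : A = univ
      · exact ⟨[], trivial, by simp [hA]⟩
      · obtain ⟨u, v, hu, hv, huv, hrest⟩ := exists_applicable hA hcl
        have hcl' : ∀ x, ZFClosed G (insert v A) x :=
          fun x => ZFClosed_mono (Set.subset_insert _ _) (hcl x)
        have hcard : ((insert v A)ᶜ).ncard ≤ n := by
          have hc : (insert v A)ᶜ = Aᶜ \ {v} := by
            ext x; simp [and_comm]
          have hvc : v ∈ Aᶜ := hv
          rw [hc, Set.ncard_diff_singleton_of_mem hvc]
          have hpos : 0 < (Aᶜ).ncard := (Set.ncard_pos (Set.toFinite _)).mpr ⟨v, hvc⟩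
          omega
        obtain ⟨L, hL, hU⟩ := ih (insert v A) hcard hcl'
        refine ⟨(u, v) :: L, ⟨hu, hv, huv, hrest, hL⟩, ?_⟩
        rw [← hU, ZFsnds_cons]
        ext x; simp; tauto

lemma snds_reverse_swap (L : List (V × V)) :
    ZFsnds (L.reverse.map Prod.swap) = ZFfsts L := by
  ext x
  simp only [ZFsnds, ZFfsts, Set.mem_setOf_eq, List.mem_map, List.mem_reverse]
  constructor
  · rintro ⟨q, ⟨p, hp, rfl⟩, rfl⟩
    exact ⟨p, hp, rfl⟩
  · rintro ⟨p, hp, rfl⟩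
    exact ⟨p.swap, ⟨p, hp, rfl⟩, rfl⟩

end ZFAux

/-- A finite graph has exactly one minimum zero forcing set iff it has no edges. -/
theorem unique_min_zero_forcing_iff_no_edges {V : Type*} [Fintype V] (G : SimpleGraph V) :
    (∃! S : Set V, IsMinZeroForcingSet G S) ↔ G.edgeSet = ∅ := by
  constructor
  · intro hEx
    by_contra hE
    rw [← Ne, ← Set.nonempty_iff_ne_empty] at hE
    obtain ⟨e, he⟩ := hE
    revert he
    refine Sym2.ind (fun a b => ?_) e
    intro hab
    rw [SimpleGraph.mem_edgeSet] at hab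
    obtain ⟨S, hS, huniq⟩ := hEx
    -- univ \ {b} is a zero forcing set
    have hZb : IsZeroForcingSet G (Set.univ \ {b}) := by
      intro x
      by_cases hx : x = b
      · subst hx
        refine ZFClosed.force a x (ZFClosed.init a ?_) hab
          (fun w hw hwb => ZFClosed.init w ?_)
        · simp [hab.ne]
        · simp [hwb]
      · exact ZFClosed.init x (by simp [hx])
    -- S ≠ univ
    have hcardlt : S.ncard < (Set.univ : Set V).ncard := by
      have h1 : S.ncard ≤ (Set.univ \ {b} : Set V).ncard := hS.2 _ hZb
      have h2 : (Set.univ \ {b} : Set V).ncard = (Set.univ : Set V).ncard - 1 :=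
        Set.ncard_diff_singleton_of_mem (Set.mem_univ b)
      have h3 : 0 < (Set.univ : Set V).ncard :=
        (Set.ncard_pos (Set.toFinite _)).mpr ⟨b, Set.mem_univ b⟩
      omega
    have hSne : S ≠ Set.univ := fun h => by rw [h] at hcardlt; omega
    -- extract a chronological forcing sequence
    obtain ⟨L, hL, hU⟩ := exists_seq (Sᶜ).ncard S le_rfl hS.1
    have hLne : L ≠ [] := by
      rintro rfl
      simp at hU
      exact hSne hU
    -- the reversal
    set T : Set V := Set.univ \ ZFfsts L with hT
    have hTvalid := valid_reverse L S hL
    have hTzfs : IsZeroForcingSet G T := by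
      intro x
      refine closed_of_valid _ _ hTvalid x ?_
      have huniv : T ∪ ZFsnds (L.reverse.map Prod.swap) = Set.univ := by
        rw [snds_reverse_swap, hT]
        exact Set.diff_union_of_subset (Set.subset_univ _)
      rw [huniv]
      trivial
    -- cardinality
    have hk : (ZFfsts L).ncard = L.length := ncard_fsts L S hL
    have hTS : T.ncard ≤ S.ncard := by
      have h1 : T.ncard = (Set.univ : Set V).ncard - L.length := by
        rw [hT, Set.ncard_diff (Set.subset_univ _) (Set.toFinite _), hk]
      have h2 : (Set.univ : Set V).ncard ≤ S.ncard + L.length := by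
        calc (Set.univ : Set V).ncard = (S ∪ ZFsnds L).ncard := by rw [hU]
          _ ≤ S.ncard + (ZFsnds L).ncard := Set.ncard_union_le _ _
          _ ≤ S.ncard + L.length := by have := ncard_snds_le L (V := V); omega
      omega
    have hTmin : IsMinZeroForcingSet G T :=
      ⟨hTzfs, fun S' hS' => le_trans hTS (hS.2 S' hS')⟩
    -- T ≠ S
    obtain ⟨p, L₂, rfl⟩ := List.exists_cons_of_ne_nil hLne
    have hp1S : p.1 ∈ S := hL.1
    have hp1T : p.1 ∉ T := by
      rw [hT]
      simp only [Set.mem_diff, Set.mem_univ, true_and, not_not]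
      exact ⟨p, List.mem_cons_self, rfl⟩
    have := huniq T hTmin
    rw [this] at hp1T
    exact hp1T hp1S
  · intro hE
    have hadj : ∀ u v : V, ¬ G.Adj u v := by
      intro u v h
      have : s(u, v) ∈ G.edgeSet := h
      rw [hE] at this
      exact this
    have hclosed : ∀ (S : Set V) (v : V), ZFClosed G S v → v ∈ S := by
      intro S v hv
      induction hv with
      | init v hv => exact hv
      | force u v hu huv _ _ _ => exact absurd huv (hadj u v)
    have hZFS : ∀ S : Set V, IsZeroForcingSet G S ↔ S = Set.univ := by
      intro S
      constructor
      · intro h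
        exact Set.eq_univ_of_forall fun x => hclosed S x (h x)
      · rintro rfl x
        exact ZFClosed.init x (Set.mem_univ x)
    refine ⟨Set.univ, ⟨(hZFS _).mpr rfl, fun S' hS' => ?_⟩, fun S hS => ?_⟩
    · rw [(hZFS S').mp hS']
    · exact (hZFS S).mp hS.1
end

section
/- If 𝒫 is a minimum path cover of a finite tree T and e = xy is a connector edge of 𝒫, then at least one of the endpoints x, y of e is an interior connector vertex of 𝒫. -/
/-- A nonempty list of distinct vertices forming an induced path of `G`:
consecutive vertices are adjacent and non-consecutive vertices are non-adjacent. -/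
def IsInducedPath {V : Type*} (G : SimpleGraph V) (l : List V) : Prop :=
  l ≠ [] ∧ l.Nodup ∧
  (∀ i j : Fin l.length, (i : ℕ) + 1 = (j : ℕ) → G.Adj (l.get i) (l.get j)) ∧
  (∀ i j : Fin l.length, (i : ℕ) + 1 < (j : ℕ) → ¬ G.Adj (l.get i) (l.get j))

/-- A path cover of `G`: a set of pairwise vertex-disjoint induced paths covering all
vertices of `G`. -/
def IsPathCover {V : Type*} [DecidableEq V] (G : SimpleGraph V) (P : Finset (List V)) : Prop :=
  (∀ l ∈ P, IsInducedPath G l) ∧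
  (∀ v : V, ∃ l ∈ P, v ∈ l) ∧
  (∀ l ∈ P, ∀ l' ∈ P, l ≠ l' → ∀ v : V, v ∈ l → v ∉ l')

/-- A minimum path cover: a path cover with the fewest possible number of paths. -/
def IsMinPathCover {V : Type*} [DecidableEq V] (G : SimpleGraph V)
    (P : Finset (List V)) : Prop :=
  IsPathCover G P ∧ ∀ Q : Finset (List V), IsPathCover G Q → P.card ≤ Q.card

/-- `x` is an interior vertex of some path of the cover `P`, i.e. it belongs to a path
of `P` and is not an end-vertex of that path. -/
def InteriorIn {V : Type*} (P : Finset (List V)) (x : V) : Prop :=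
  ∃ l ∈ P, ∃ h : l ≠ [], x ∈ l ∧ x ≠ l.head h ∧ x ≠ l.getLast h

private lemma chain'_reach_head {V : Type*} (G : SimpleGraph V) :
    ∀ (l : List V), l.Chain' G.Adj → ∀ (hl : l ≠ []) (a : V), a ∈ l →
      G.Reachable a (l.head hl)
  | [] => by simp
  | c :: t => by
    intro hch hl a ha
    rcases List.mem_cons.mp ha with rfl | hat
    · simp only [List.head_cons]
      exact SimpleGraph.Reachable.refl _
    · have ht : t ≠ [] := List.ne_nil_of_mem hat
      have ih := chain'_reach_head G t hch.tail ht a hat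
      have hadj : G.Adj c (t.head ht) := by
        cases t with
        | nil => exact absurd rfl ht
        | cons b s => exact (List.isChain_cons_cons.mp hch).1
      simpa using ih.trans (SimpleGraph.Adj.reachable hadj).symm

private lemma chain'_reach {V : Type*} (G : SimpleGraph V) (l : List V)
    (hch : l.Chain' G.Adj) {a b : V} (ha : a ∈ l) (hb : b ∈ l) :
    G.Reachable a b := by
  have hl : l ≠ [] := List.ne_nil_of_mem ha
  exact (chain'_reach_head G l hch hl a ha).trans (chain'_reach_head G l hch hl b hb).symm

/-- In a tree, any nodup list whose consecutive entries are adjacent is an induced path. -/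
private lemma isInducedPath_of_chain' {V : Type*} (T : SimpleGraph V) (hT : T.IsTree)
    (l : List V) (hne : l ≠ []) (hnd : l.Nodup) (hch : l.Chain' T.Adj) :
    IsInducedPath T l := by
  refine ⟨hne, hnd, ?_, ?_⟩
  · intro i j hij
    have h1 : (i : ℕ) + 1 < l.length := by omega
    have h2 := (List.isChain_iff_getElem.mp hch) i h1
    have hj : (⟨(i : ℕ) + 1, by omega⟩ : Fin l.length) = j := Fin.ext hij
    rw [← hj]
    exact h2
  · intro i j hij hadj
    set u := l.get i with hu
    set v := l.get j with hv
    have hbridge : T.IsBridge s(u, v) :=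
      (SimpleGraph.isAcyclic_iff_forall_edge_isBridge.mp hT.2) hadj
    have hnr := SimpleGraph.isBridge_iff.mp hbridge
    apply hnr
    set G' := T \ SimpleGraph.fromEdgeSet {s(u, v)} with hG'
    have hch' : l.Chain' G'.Adj := by
      apply List.isChain_iff_getElem.mpr
      intro k hk
      have hTadj := (List.isChain_iff_getElem.mp hch) k hk
      rw [SimpleGraph.sdiff_adj]
      refine ⟨hTadj, ?_⟩
      rw [SimpleGraph.fromEdgeSet_adj]
      rintro ⟨hmem, -⟩
      rw [Set.mem_singleton_iff, Sym2.eq_iff] at hmem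
      rcases hmem with ⟨h1, h2⟩ | ⟨h1, h2⟩
      · have e1 : (⟨k, by omega⟩ : Fin l.length) = i := (hnd.get_inj_iff).mp h1
        have e2 : (⟨k + 1, by omega⟩ : Fin l.length) = j := (hnd.get_inj_iff).mp h2
        have f1 : k = (i : ℕ) := by simpa using congrArg Fin.val e1
        have f2 : k + 1 = (j : ℕ) := by simpa using congrArg Fin.val e2
        omega
      · have e1 : (⟨k, by omega⟩ : Fin l.length) = j := (hnd.get_inj_iff).mp h1
        have e2 : (⟨k + 1, by omega⟩ : Fin l.length) = i := (hnd.get_inj_iff).mp h2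
        have f1 : k = (j : ℕ) := by simpa using congrArg Fin.val e1
        have f2 : k + 1 = (i : ℕ) := by simpa using congrArg Fin.val e2
        omega
    exact chain'_reach G' l hch' (l.get_mem _) (l.get_mem _)

private lemma chain'_of_inducedPath {V : Type*} {G : SimpleGraph V} {l : List V}
    (h : IsInducedPath G l) : l.Chain' G.Adj := by
  apply List.isChain_iff_getElem.mpr
  intro k hk
  exact h.2.2.1 ⟨k, by omega⟩ ⟨k + 1, by omega⟩ rfl

/-- If `P` is a minimum path cover of a finite tree `T` and `xy` is a connector edge of
`P`, then at least one of `x`, `y` is an interior connector vertex of `P`. -/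
theorem connector_edge_has_interior_endpoint {V : Type*} [Fintype V] [DecidableEq V]
    (T : SimpleGraph V) (hT : T.IsTree)
    (P : Finset (List V)) (hP : IsMinPathCover T P)
    (x y : V) (hxy : T.Adj x y)
    (lx ly : List V) (hlx : lx ∈ P) (hly : ly ∈ P)
    (hx : x ∈ lx) (hy : y ∈ ly) (hne : lx ≠ ly) :
    InteriorIn P x ∨ InteriorIn P y := by
  by_contra hcon
  push_neg at hcon
  obtain ⟨hxI, hyI⟩ := hcon
  obtain ⟨⟨hind, hcov, hdisj⟩, hmin⟩ := hP
  have hlxne : lx ≠ [] := (hind lx hlx).1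
  have hlyne : ly ≠ [] := (hind ly hly).1
  unfold InteriorIn at hxI hyI
  push_neg at hxI hyI
  -- x is an end of lx, y is an end of ly
  have hxend : x = lx.head hlxne ∨ x = lx.getLast hlxne := by
    by_cases h1 : x = lx.head hlxne
    · exact Or.inl h1
    · exact Or.inr (hxI lx hlx hlxne hx h1)
  have hyend : y = ly.head hlyne ∨ y = ly.getLast hlyne := by
    by_cases h1 : y = ly.head hlyne
    · exact Or.inl h1
    · exact Or.inr (hyI ly hly hlyne hy h1)
  have hchlx : lx.Chain' T.Adj := chain'_of_inducedPath (hind lx hlx)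
  have hchly : ly.Chain' T.Adj := chain'_of_inducedPath (hind ly hly)
  -- orient lx so that x is its last vertex
  obtain ⟨lx', hmemx, hndx, hchx, hlx'ne, hlastx⟩ :
      ∃ lx' : List V, (∀ v, v ∈ lx' ↔ v ∈ lx) ∧ lx'.Nodup ∧ lx'.Chain' T.Adj ∧
        ∃ h : lx' ≠ [], x = lx'.getLast h := by
    rcases hxend with h1 | h1
    · refine ⟨lx.reverse, by simp, by simpa using (hind lx hlx).2.1, ?_,
        by simpa using hlxne, ?_⟩
      · exact List.isChain_reverse.mpr (hchlx.imp fun a b h => h.symm)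
      · rw [List.getLast_reverse]; exact h1
    · exact ⟨lx, fun v => Iff.rfl, (hind lx hlx).2.1, hchlx, hlxne, h1⟩
  -- orient ly so that y is its first vertex
  obtain ⟨ly', hmemy, hndy, hchy, hly'ne, hheady⟩ :
      ∃ ly' : List V, (∀ v, v ∈ ly' ↔ v ∈ ly) ∧ ly'.Nodup ∧ ly'.Chain' T.Adj ∧
        ∃ h : ly' ≠ [], y = ly'.head h := by
    rcases hyend with h1 | h1
    · exact ⟨ly, fun v => Iff.rfl, (hind ly hly).2.1, hchly, hlyne, h1⟩
    · refine ⟨ly.reverse, by simp, by simpa using (hind ly hly).2.1, ?_,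
        by simpa using hlyne, ?_⟩
      · exact List.isChain_reverse.mpr (hchly.imp fun a b h => h.symm)
      · rw [List.head_reverse]; exact h1
  -- the merged list
  set m : List V := lx' ++ ly' with hm
  have hmne : m ≠ [] := by
    simp [hm, hlx'ne]
  have hmemm : ∀ v, v ∈ m ↔ v ∈ lx ∨ v ∈ ly := by
    intro v
    simp [hm, List.mem_append, hmemx v, hmemy v]
  have hdisjxy : ∀ v ∈ lx, v ∉ ly := fun v hv => hdisj lx hlx ly hly hne v hv
  have hndm : m.Nodup := by
    rw [hm, List.nodup_append]
    exact ⟨hndx, hndy, fun a ha b hb hab =>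
      hdisjxy a ((hmemx a).mp ha) ((hmemy a).mp (by rw [hab]; exact hb))⟩
  have hchm : m.Chain' T.Adj := by
    rw [hm]; refine List.isChain_append.mpr ?_
    refine ⟨hchx, hchy, ?_⟩
    intro a ha b hb
    rw [List.getLast?_eq_getLast hlx'ne] at ha
    rw [List.head?_eq_head hly'ne] at hb
    simp only [Option.mem_some_iff] at ha hb
    rw [← ha, ← hb, ← hlastx, ← hheady]
    exact hxy
  have hmInd : IsInducedPath T m := isInducedPath_of_chain' T hT m hmne hndm hchm
  have hxm : x ∈ m := (hmemm x).mpr (Or.inl hx)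
  have hym : y ∈ m := (hmemm y).mpr (Or.inr hy)
  -- m is not in P
  have hynotlx : y ∉ lx := hdisj ly hly lx hlx hne.symm y hy
  have hmnotP : m ∉ P := by
    intro hmP
    have hmnelx : m ≠ lx := fun h => hynotlx (h ▸ hym)
    exact hdisj m hmP lx hlx hmnelx x hxm hx
  -- the new cover
  set E : Finset (List V) := (P.erase ly).erase lx with hE
  have hEsub : ∀ l ∈ E, l ∈ P ∧ l ≠ lx ∧ l ≠ ly := by
    intro l hl
    rw [hE, Finset.mem_erase, Finset.mem_erase] at hl
    exact ⟨hl.2.2, hl.1, hl.2.1⟩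
  set Q : Finset (List V) := insert m E with hQ
  have hQcover : IsPathCover T Q := by
    refine ⟨?_, ?_, ?_⟩
    · intro l hl
      rcases Finset.mem_insert.mp hl with rfl | hl
      · exact hmInd
      · exact hind l (hEsub l hl).1
    · intro v
      obtain ⟨l, hlP, hvl⟩ := hcov v
      by_cases h1 : l = lx
      · exact ⟨m, Finset.mem_insert_self _ _, (hmemm v).mpr (Or.inl (h1 ▸ hvl))⟩
      by_cases h2 : l = ly
      · exact ⟨m, Finset.mem_insert_self _ _, (hmemm v).mpr (Or.inr (h2 ▸ hvl))⟩
      · exact ⟨l, Finset.mem_insert_of_mem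
          (by rw [hE, Finset.mem_erase, Finset.mem_erase]; exact ⟨h1, h2, hlP⟩), hvl⟩
    · intro l hl l' hl' hll' v hvl
      rcases Finset.mem_insert.mp hl with rfl | hl
      · rcases Finset.mem_insert.mp hl' with rfl | hl'
        · exact absurd rfl hll'
        · obtain ⟨hl'P, hl'x, hl'y⟩ := hEsub l' hl'
          rcases (hmemm v).mp hvl with hvlx | hvly
          · exact hdisj lx hlx l' hl'P (Ne.symm hl'x) v hvlx
          · exact hdisj ly hly l' hl'P (Ne.symm hl'y) v hvly
      · obtain ⟨hlP, hlx', hly'⟩ := hEsub l hl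
        rcases Finset.mem_insert.mp hl' with rfl | hl'
        · intro hvm
          rcases (hmemm v).mp hvm with hvlx | hvly
          · exact hdisj lx hlx l hlP (Ne.symm hlx') v hvlx hvl
          · exact hdisj ly hly l hlP (Ne.symm hly') v hvly hvl
        · exact hdisj l hlP l' (hEsub l' hl').1 hll' v hvl
  have hcard := hmin Q hQcover
  have hmnotE : m ∉ E := fun h => hmnotP (hEsub m h).1
  have hQcard : Q.card = E.card + 1 := by
    rw [hQ, Finset.card_insert_of_notMem hmnotE]
  have hlxE : lx ∈ P.erase ly := Finset.mem_erase.mpr ⟨hne, hlx⟩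
  have hEcard : E.card = P.card - 1 - 1 := by
    rw [hE, Finset.card_erase_of_mem hlxE, Finset.card_erase_of_mem hly]
  have hP2 : 2 ≤ P.card := Finset.one_lt_card.mpr ⟨lx, hlx, ly, hly, hne⟩
  omega
end

section
/- If G is a finite simple graph and x is an arbitrary vertex of G, then there exists a Grundy dominating sequence of G (that is, a closed neighborhood sequence of maximum length) whose set of vertices contains x. -/
/-- A closed neighborhood sequence in `G`: a list of distinct vertices such that each
vertex footprints some vertex of its closed neighborhood not contained in the closed
neighborhood of any earlier vertex. -/
def IsClosedNbrSeq {V : Type*} (G : SimpleGraph V) (l : List V) : Prop :=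
  l.Nodup ∧ ∀ i : Fin l.length, ∃ w : V, (w = l.get i ∨ G.Adj (l.get i) w) ∧
    ∀ j : Fin l.length, (j : ℕ) < (i : ℕ) → w ≠ l.get j ∧ ¬ G.Adj (l.get j) w

/-- A Grundy dominating sequence: a closed neighborhood sequence of maximum length. -/
def IsGrundyDomSeq {V : Type*} (G : SimpleGraph V) (l : List V) : Prop :=
  IsClosedNbrSeq G l ∧ ∀ l' : List V, IsClosedNbrSeq G l' → l'.length ≤ l.length

private lemma nodup_set' {V : Type*} {l : List V} {x : V} {p : ℕ} (hl : l.Nodup) (hx : x ∉ l) :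
    (l.set p x).Nodup := by
  rw [List.nodup_iff_injective_get] at hl ⊢
  rintro ⟨i, hi⟩ ⟨j, hj⟩ h
  simp only [List.length_set] at hi hj
  simp only [List.get_eq_getElem, List.getElem_set] at h
  simp only [Fin.mk.injEq]
  split_ifs at h with h1 h2 h2
  · omega
  · exact absurd (h ▸ List.getElem_mem hj) hx
  · exact absurd (h.symm ▸ List.getElem_mem hi) hx
  · have := hl (a₁ := ⟨i, hi⟩) (a₂ := ⟨j, hj⟩) (by simpa using h)
    simpa using this

/-- For every vertex `x` of a finite graph `G` there exists a Grundy dominating sequence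
of `G` containing `x`. -/
theorem exists_grundyDomSeq_containing {V : Type*} [Fintype V] (G : SimpleGraph V) (x : V) :
    ∃ l : List V, IsGrundyDomSeq G l ∧ x ∈ l := by
  classical
  -- A maximum-length closed neighborhood sequence exists.
  have hQ0 : ∃ l : List V, IsClosedNbrSeq G l ∧ l.length = 0 :=
    ⟨[], ⟨List.nodup_nil, fun i => i.elim0⟩, rfl⟩
  have hspec := Nat.findGreatest_spec
    (P := fun n => ∃ l₀ : List V, IsClosedNbrSeq G l₀ ∧ l₀.length = n)
    (n := Fintype.card V) (Nat.zero_le _) hQ0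
  obtain ⟨l, hl, hllen⟩ := hspec
  have hmax : ∀ l' : List V, IsClosedNbrSeq G l' → l'.length ≤ l.length := by
    intro l' hl'
    by_contra h
    push_neg at h
    exact Nat.findGreatest_is_greatest
      (P := fun n => ∃ l₀ : List V, IsClosedNbrSeq G l₀ ∧ l₀.length = n)
      (n := Fintype.card V) (by omega) (hl'.1.length_le_card) ⟨l', hl', rfl⟩
  by_cases hx : x ∈ l
  · exact ⟨l, ⟨hl, hmax⟩, hx⟩
  obtain ⟨hnd, hfp⟩ := hl
  -- Every vertex of the closed neighborhood of x is covered by l.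
  have hcov : ∀ w : V, (w = x ∨ G.Adj x w) →
      ∃ j : ℕ, ∃ hj : j < l.length, w = l.get ⟨j, hj⟩ ∨ G.Adj (l.get ⟨j, hj⟩) w := by
    by_contra hc
    push_neg at hc
    obtain ⟨w, hw1, hw2⟩ := hc
    have hseq : IsClosedNbrSeq G (l ++ [x]) := by
      constructor
      · simp [List.nodup_append, hnd, hx]
        exact fun a ha h => hx (h ▸ ha)
      · intro i
        have hilen : (i : ℕ) < l.length + 1 := by simpa using i.isLt
        by_cases hik : (i : ℕ) < l.length
        · obtain ⟨v, hv1, hv2⟩ := hfp ⟨i, hik⟩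
          have hgi : (l ++ [x]).get i = l.get ⟨i, hik⟩ := by
            simp only [List.get_eq_getElem]
            exact List.getElem_append_left hik
          refine ⟨v, by rw [hgi]; exact hv1, ?_⟩
          intro j hj
          have hjk : (j : ℕ) < l.length := lt_trans hj hik
          have hgj : (l ++ [x]).get j = l.get ⟨j, hjk⟩ := by
            simp only [List.get_eq_getElem]
            exact List.getElem_append_left hjk
          rw [hgj]
          exact hv2 ⟨j, hjk⟩ hj
        · have hik' : (i : ℕ) = l.length := by omega
          have hgi : (l ++ [x]).get i = x := by
            simp only [List.get_eq_getElem]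
            rw [List.getElem_append_right (le_of_eq hik'.symm)]
            simp [hik']
          refine ⟨w, by rw [hgi]; exact hw1, ?_⟩
          intro j hj
          have hjk : (j : ℕ) < l.length := by omega
          have hgj : (l ++ [x]).get j = l.get ⟨j, hjk⟩ := by
            simp only [List.get_eq_getElem]
            exact List.getElem_append_left hjk
          rw [hgj]
          exact hw2 j hjk
    have := hmax _ hseq
    simp at this
  -- The greatest p such that x still footprints after the prefix of length p.
  set P : ℕ → Prop := fun n => ∃ w : V, (w = x ∨ G.Adj x w) ∧
      ∀ j : ℕ, ∀ hj : j < l.length, j < n →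
        ¬(w = l.get ⟨j, hj⟩ ∨ G.Adj (l.get ⟨j, hj⟩) w) with hPdef
  have hP0 : P 0 := ⟨x, Or.inl rfl, fun j hj hj0 => absurd hj0 (Nat.not_lt_zero j)⟩
  have hPk : ¬ P l.length := by
    rintro ⟨w, hw1, hw2⟩
    obtain ⟨j, hj, hjw⟩ := hcov w hw1
    exact hw2 j hj hj hjw
  set p := Nat.findGreatest P l.length with hpdef
  have hPp : P p := Nat.findGreatest_spec (Nat.zero_le _) hP0
  have hple : p ≤ l.length := Nat.findGreatest_le _
  have hplt : p < l.length := lt_of_le_of_ne hple (fun h => hPk (h ▸ hPp))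
  have hPp1 : ¬ P (p + 1) := Nat.findGreatest_is_greatest (Nat.lt_succ_self _) hplt
  simp only [hPdef] at hPp1
  push_neg at hPp1
  obtain ⟨w₀, hw₀1, hw₀2⟩ := hPp
  -- Replace the p-th entry of l by x.
  set l' := l.set p x with hl'def
  have hlen' : l'.length = l.length := List.length_set
  have hget' : ∀ i : Fin l'.length, ∀ hi : (i : ℕ) < l.length,
      l'.get i = if p = (i : ℕ) then x else l.get ⟨i, hi⟩ := by
    intro i hi
    simp [hl'def, List.get_eq_getElem, List.getElem_set]
  have hxl' : x ∈ l' := by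
    have hplt' : p < l'.length := by omega
    have : l'.get ⟨p, hplt'⟩ = x := by rw [hget' ⟨p, hplt'⟩ hplt]; simp
    exact this ▸ List.get_mem l' ⟨p, hplt'⟩
  have hseq' : IsClosedNbrSeq G l' := by
    refine ⟨nodup_set' hnd hx, ?_⟩
    intro i
    have hi : (i : ℕ) < l.length := by have := i.isLt; omega
    rcases lt_trichotomy (i : ℕ) p with hip | hip | hip
    · -- i < p : the old witness still works
      obtain ⟨v, hv1, hv2⟩ := hfp ⟨i, hi⟩
      have hgi : l'.get i = l.get ⟨i, hi⟩ := by rw [hget' i hi, if_neg (by omega)]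
      refine ⟨v, by rw [hgi]; exact hv1, ?_⟩
      intro j hj
      have hjl : (j : ℕ) < l.length := by omega
      have hgj : l'.get j = l.get ⟨j, hjl⟩ := by rw [hget' j hjl, if_neg (by omega)]
      rw [hgj]
      exact hv2 ⟨j, hjl⟩ hj
    · -- i = p : x footprints w₀
      have hgi : l'.get i = x := by rw [hget' i hi, if_pos hip.symm]
      refine ⟨w₀, by rw [hgi]; exact hw₀1, ?_⟩
      intro j hj
      have hjl : (j : ℕ) < l.length := by omega
      have hgj : l'.get j = l.get ⟨j, hjl⟩ := by rw [hget' j hjl, if_neg (by omega)]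
      rw [hgj]
      have := hw₀2 j hjl (by omega)
      exact ⟨fun h => this (Or.inl h), fun h => this (Or.inr h)⟩
    · -- i > p : the old witness still works, and avoids N[x]
      obtain ⟨v, hv1, hv2⟩ := hfp ⟨i, hi⟩
      have hgi : l'.get i = l.get ⟨i, hi⟩ := by rw [hget' i hi, if_neg (by omega)]
      refine ⟨v, by rw [hgi]; exact hv1, ?_⟩
      intro j hj
      have hjl : (j : ℕ) < l.length := by omega
      by_cases hjp : (j : ℕ) = p
      · have hgj : l'.get j = x := by rw [hget' j hjl, if_pos hjp.symm]
        rw [hgj]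
        have hcontra : ¬(v = x ∨ G.Adj x v) := by
          intro h
          obtain ⟨j', hj', hj'p, hC⟩ := hPp1 v h
          have := hv2 ⟨j', hj'⟩ (by simp only [Fin.val_mk]; omega)
          rcases hC with hC | hC
          · exact this.1 hC
          · exact this.2 hC
        exact ⟨fun h => hcontra (Or.inl h), fun h => hcontra (Or.inr h)⟩
      · have hgj : l'.get j = l.get ⟨j, hjl⟩ := by rw [hget' j hjl, if_neg (Ne.symm hjp)]
        rw [hgj]
        exact hv2 ⟨j, hjl⟩ hj
  refine ⟨l', ⟨hseq', fun l'' hl'' => ?_⟩, hxl'⟩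
  rw [hlen']
  exact hmax l'' hl''
end

section
/- If G is a finite simple graph, then the union, over all Grundy dominating sequences S of G, of the vertex sets of S equals V(G). -/
/-- Index congruence for `getElem` on lists. -/
lemma getElem_idx_congr {α : Type*} (L : List α) {m n : ℕ} (h : m = n)
    {hm : m < L.length} {hn : n < L.length} : L[m]'hm = L[n]'hn := by subst h; rfl

/-- A `getElem`-based restatement of `IsClosedNbrSeq`. -/
lemma isCNS_iff {V : Type*} (G : SimpleGraph V) (l : List V) :
    IsClosedNbrSeq G l ↔ l.Nodup ∧ ∀ i (hi : i < l.length), ∃ w : V,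
      (w = l[i] ∨ G.Adj l[i] w) ∧
      ∀ j (hj : j < l.length), j < i → w ≠ l[j] ∧ ¬ G.Adj l[j] w := by
  unfold IsClosedNbrSeq
  simp only [List.get_eq_getElem]
  constructor
  · rintro ⟨h1, h2⟩
    refine ⟨h1, fun i hi => ?_⟩
    obtain ⟨w, hw1, hw2⟩ := h2 ⟨i, hi⟩
    exact ⟨w, hw1, fun j hj hji => hw2 ⟨j, hj⟩ hji⟩
  · rintro ⟨h1, h2⟩
    refine ⟨h1, fun i => ?_⟩
    obtain ⟨w, hw1, hw2⟩ := h2 i.1 i.2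
    exact ⟨w, hw1, fun j hji => hw2 j.1 j.2 hji⟩

/-- `w` is in the closed neighborhood of some vertex among the first `n` entries of `l`. -/
def CovTake {V : Type*} (G : SimpleGraph V) (l : List V) (n : ℕ) (w : V) : Prop :=
  ∃ j, ∃ hj : j < l.length, j < n ∧ (w = l[j] ∨ G.Adj l[j] w)

/-- The union, over all Grundy dominating sequences of a finite graph `G`, of their
vertex sets equals the whole vertex set of `G`. -/
theorem union_grundyDomSeq_eq_univ {V : Type*} [Fintype V] (G : SimpleGraph V) :
    {x : V | ∃ l : List V, IsGrundyDomSeq G l ∧ x ∈ l} = Set.univ := by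
  classical
  rw [Set.eq_univ_iff_forall]
  intro x
  -- get a maximum-length closed neighborhood sequence
  set P : ℕ → Prop := fun n => ∃ l : List V, IsClosedNbrSeq G l ∧ l.length = n with hP
  have hP0 : P 0 := ⟨[], ⟨List.nodup_nil, fun i => absurd i.2 (by simp)⟩, rfl⟩
  have hbd : ∀ l : List V, IsClosedNbrSeq G l → l.length ≤ Fintype.card V :=
    fun l hl => hl.1.length_le_card
  have hPk : P (Nat.findGreatest P (Fintype.card V)) :=
    Nat.findGreatest_spec (Nat.zero_le _) hP0
  obtain ⟨l, hl, hlk⟩ := hPk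
  have hmax : ∀ l' : List V, IsClosedNbrSeq G l' → l'.length ≤ l.length := by
    intro l' hl'
    rw [hlk]
    exact Nat.le_findGreatest (hbd l' hl') ⟨l', hl', rfl⟩
  by_cases hxl : x ∈ l
  · exact ⟨l, ⟨hl, hmax⟩, hxl⟩
  -- x ∉ l.  First: N[x] is covered by l.
  rw [isCNS_iff] at hl
  obtain ⟨hnd, hseq⟩ := hl
  have hQlen : ∀ w : V, (w = x ∨ G.Adj x w) → CovTake G l l.length w := by
    intro w hw
    by_contra hnc
    -- then l ++ [x] would be a longer closed neighborhood sequence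
    have hcns : IsClosedNbrSeq G (l ++ [x]) := by
      rw [isCNS_iff]
      constructor
      · exact List.nodup_append'.mpr ⟨hnd, List.nodup_singleton x,
          by intro a ha hax; simp at hax; exact hxl (hax ▸ ha)⟩
      · intro i hi
        simp only [List.length_append, List.length_singleton] at hi
        rcases lt_or_ge i l.length with h' | h'
        · obtain ⟨w', hw1, hw2⟩ := hseq i h'
          refine ⟨w', ?_, ?_⟩
          · rwa [List.getElem_append_left h']
          · intro j hj hji
            have hjl : j < l.length := lt_trans hji h'
            rw [List.getElem_append_left hjl]
            exact hw2 j hjl hji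
        · have hieq : i = l.length := le_antisymm (by omega) h'
          refine ⟨w, ?_, ?_⟩
          · rw [List.getElem_concat_length hieq]; exact hw
          · intro j hj hji
            have hjl : j < l.length := by omega
            rw [List.getElem_append_left hjl]
            exact ⟨fun h => hnc ⟨j, hjl, hjl, Or.inl h⟩,
                   fun h => hnc ⟨j, hjl, hjl, Or.inr h⟩⟩
    have := hmax _ hcns
    simp at this
  -- least t with N[x] contained in the first t closed neighborhoods of l
  have hQex : ∃ n, ∀ w : V, (w = x ∨ G.Adj x w) → CovTake G l n w :=
    ⟨l.length, hQlen⟩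
  set t := Nat.find hQex with ht
  have hQt : ∀ w : V, (w = x ∨ G.Adj x w) → CovTake G l t w := Nat.find_spec hQex
  have ht0 : 0 < t := by
    rcases Nat.eq_zero_or_pos t with h0 | h0
    · obtain ⟨j, hj, hj0, _⟩ := hQt x (Or.inl rfl)
      rw [h0] at hj0; omega
    · exact h0
  have htlen : t ≤ l.length := Nat.find_le hQlen
  set s := t - 1 with hs
  have hst : s + 1 = t := Nat.succ_pred_eq_of_pos ht0
  have hsk : s < l.length := by omega
  have hQs : ¬ ∀ w : V, (w = x ∨ G.Adj x w) → CovTake G l s w :=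
    Nat.find_min hQex (by omega)
  push_neg at hQs
  obtain ⟨w0, hw0, hw0nc⟩ := hQs
  -- the new sequence: replace the entry at position s by x
  set A := l.take s with hA
  set B := l.drop (s + 1) with hB
  have hAlen : A.length = s := by simp [hA, hsk.le]
  have hBlen : B.length = l.length - (s + 1) := by simp [hB]
  have hlen' : (A ++ x :: B).length = l.length := by
    simp only [List.length_append, List.length_cons, hAlen, hBlen]
    omega
  -- getElem facts
  have g_lt : ∀ i (hi : i < s) (hi' : i < (A ++ x :: B).length),
      (A ++ x :: B)[i] = l[i]'(by omega) := by
    intro i hi hi'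
    rw [List.getElem_append_left (by omega : i < A.length)]
    exact List.getElem_take
  have g_eq : ∀ (hs' : s < (A ++ x :: B).length), (A ++ x :: B)[s] = x := by
    intro hs'
    rw [List.getElem_append_right (by omega : A.length ≤ s)]
    have h0 : s - A.length = 0 := by omega
    simp [h0]
  have g_gt : ∀ i (hi : s < i) (hi2 : i < l.length) (hi' : i < (A ++ x :: B).length),
      (A ++ x :: B)[i] = l[i] := by
    intro i hi hi2 hi'
    rw [List.getElem_append_right (by omega : A.length ≤ i)]
    have h1 : i - A.length = (i - s - 1) + 1 := by omega
    rw [getElem_idx_congr (x :: B) h1, List.getElem_cons_succ]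
    · exact List.getElem_drop.trans (getElem_idx_congr l (by omega))
    · simp [hBlen]; omega
  -- x ∈ A ++ x :: B
  have hxmem : x ∈ A ++ x :: B := by simp
  -- Nodup
  have hnd' : (A ++ x :: B).Nodup := by
    have hdecomp : l = A ++ l[s] :: B := by
      rw [hA, hB, ← List.drop_eq_getElem_cons hsk, List.take_append_drop]
    have h1 : (A ++ l[s] :: B).Nodup := hdecomp ▸ hnd
    have h2 : (A ++ B).Nodup := (List.nodup_middle.mp h1).of_cons
    have h3 : x ∉ A ++ B := by
      intro hmem
      rcases List.mem_append.mp hmem with h | h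
      · exact hxl ((List.take_sublist s l).mem h)
      · exact hxl ((List.drop_sublist (s+1) l).mem h)
    exact List.nodup_middle.mpr (List.nodup_cons.mpr ⟨h3, h2⟩)
  -- the new list is a closed neighborhood sequence
  have hcns' : IsClosedNbrSeq G (A ++ x :: B) := by
    rw [isCNS_iff]
    refine ⟨hnd', fun i hi => ?_⟩
    have hil : i < l.length := by omega
    rcases lt_trichotomy i s with hilt | hieq | higt
    · -- i < s : use the old witness
      obtain ⟨w', hw1, hw2⟩ := hseq i hil
      rw [g_lt i hilt hi]
      refine ⟨w', hw1, fun j hj hji => ?_⟩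
      rw [g_lt j (by omega) hj]
      exact hw2 j (by omega) hji
    · -- i = s : use w0
      subst hieq
      rw [g_eq hi]
      refine ⟨w0, hw0, fun j hj hji => ?_⟩
      rw [g_lt j hji hj]
      exact ⟨fun h => hw0nc ⟨j, by omega, hji, Or.inl h⟩,
             fun h => hw0nc ⟨j, by omega, hji, Or.inr h⟩⟩
    · -- i > s : the old witness still works; it avoids N[x] by minimality of t
      obtain ⟨w', hw1, hw2⟩ := hseq i hil
      rw [g_gt i higt hil hi]
      refine ⟨w', hw1, fun j hj hji => ?_⟩
      rcases lt_trichotomy j s with hjlt | hjeq | hjgt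
      · rw [g_lt j hjlt hj]
        exact hw2 j (by omega) hji
      · subst hjeq
        rw [g_eq hj]
        constructor
        · intro hwx
          obtain ⟨j', hj', hj't, hcov⟩ := hQt w' (Or.inl hwx)
          have h := hw2 j' hj' (by omega)
          rcases hcov with h' | h'
          · exact h.1 h'
          · exact h.2 h'
        · intro hadj
          obtain ⟨j', hj', hj't, hcov⟩ := hQt w' (Or.inr hadj)
          have h := hw2 j' hj' (by omega)
          rcases hcov with h' | h'
          · exact h.1 h'
          · exact h.2 h'
      · rw [g_gt j hjgt (by omega) hj]
        exact hw2 j (by omega) hji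
  refine ⟨A ++ x :: B, ⟨hcns', fun l'' h'' => ?_⟩, hxmem⟩
  rw [hlen']
  exact hmax l'' h''
end

section
/- A finite simple graph G has exactly one Grundy dominating set if and only if G has no edges. -/
/-- A Grundy dominating set of `G`: the set of vertices of some Grundy dominating
sequence of `G`. -/
def IsGrundyDomSet {V : Type*} (G : SimpleGraph V) (A : Set V) : Prop :=
  ∃ l : List V, IsGrundyDomSeq G l ∧ {v : V | v ∈ l} = A

section Aux

variable {V : Type*} {G : SimpleGraph V}

lemma isClosedNbrSeq_iff' {l : List V} :
    IsClosedNbrSeq G l ↔ l.Nodup ∧ ∀ i, (hi : i < l.length) → ∃ w : V,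
      (w = l[i] ∨ G.Adj l[i] w) ∧
      ∀ j, (hj : j < l.length) → j < i → w ≠ l[j] ∧ ¬ G.Adj l[j] w := by
  unfold IsClosedNbrSeq
  constructor
  · rintro ⟨hn, h⟩
    refine ⟨hn, fun i hi => ?_⟩
    obtain ⟨w, hw1, hw2⟩ := h ⟨i, hi⟩
    exact ⟨w, by simpa using hw1, fun j hj hji => by simpa using hw2 ⟨j, hj⟩ hji⟩
  · rintro ⟨hn, h⟩
    refine ⟨hn, fun i => ?_⟩
    obtain ⟨w, hw1, hw2⟩ := h i i.2
    exact ⟨w, by simpa using hw1, fun j hji => by simpa using hw2 j j.2 hji⟩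

lemma closed_prefix {l₀ : List V} {v : V} (h : IsClosedNbrSeq G (l₀ ++ [v])) :
    IsClosedNbrSeq G l₀ := by
  rw [isClosedNbrSeq_iff'] at h ⊢
  obtain ⟨hn, h⟩ := h
  refine ⟨hn.of_append_left, fun i hi => ?_⟩
  have hi' : i < (l₀ ++ [v]).length := by simp; omega
  obtain ⟨w, hw1, hw2⟩ := h i hi'
  rw [List.getElem_append_left hi] at hw1
  refine ⟨w, hw1, fun j hj hji => ?_⟩
  have := hw2 j (by simp; omega) hji
  rwa [List.getElem_append_left hj] at this

lemma closed_snoc {l₀ : List V} {z w : V} (h : IsClosedNbrSeq G l₀)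
    (hw1 : w = z ∨ G.Adj z w) (hw2 : ∀ x ∈ l₀, w ≠ x ∧ ¬ G.Adj x w) :
    IsClosedNbrSeq G (l₀ ++ [z]) := by
  have hznl : z ∉ l₀ := fun hz => by
    rcases hw1 with he | ha
    · exact (hw2 z hz).1 he
    · exact (hw2 z hz).2 ha
  rw [isClosedNbrSeq_iff'] at h ⊢
  obtain ⟨hn, h⟩ := h
  constructor
  · rw [List.nodup_append']
    exact ⟨hn, List.nodup_singleton z, by
      intro x hx hxz
      simp at hxz
      exact hznl (hxz ▸ hx)⟩
  · intro i hi
    simp only [List.length_append, List.length_singleton] at hi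
    rcases Nat.lt_or_ge i l₀.length with hil | hil
    · obtain ⟨w', hw1', hw2'⟩ := h i hil
      rw [← List.getElem_append_left hil (h' := by simp; omega)] at hw1'
      refine ⟨w', hw1', fun j hj hji => ?_⟩
      have hj' : j < l₀.length := by omega
      have := hw2' j hj' hji
      rwa [← List.getElem_append_left hj' (h' := hj)] at this
    · have hil' : i = l₀.length := by omega
      subst hil'
      have hz : (l₀ ++ [z])[l₀.length]'(by simp) = z := by simp
      refine ⟨w, ?_, fun j hj hji => ?_⟩
      · rw [hz]; exact hw1
      · have hj' : j < l₀.length := by omega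
        rw [List.getElem_append_left hj']
        exact hw2 _ (l₀.getElem_mem hj')

lemma closed_rotate {l₀ : List V} {v : V} (h : IsClosedNbrSeq G (l₀ ++ [v]))
    (hv : ∀ z, ¬ G.Adj v z) : IsClosedNbrSeq G (v :: l₀) := by
  rw [isClosedNbrSeq_iff'] at h ⊢
  obtain ⟨hn, h⟩ := h
  have hvnl : v ∉ l₀ := by
    rw [List.nodup_append'] at hn
    exact fun hx => hn.2.2 hx (by simp)
  refine ⟨List.nodup_cons.2 ⟨hvnl, (List.nodup_append'.mp hn).1⟩, ?_⟩
  intro i hi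
  match i with
  | 0 => exact ⟨v, Or.inl (by simp), fun j hj hji => absurd hji (by omega)⟩
  | (i+1) =>
    have hi' : i < l₀.length := by simp at hi; omega
    have hi'' : i < (l₀ ++ [v]).length := by simp; omega
    obtain ⟨w, hw1, hw2⟩ := h i hi''
    rw [List.getElem_append_left hi'] at hw1
    have hwv : w ≠ v := by
      rintro rfl
      rcases hw1 with he | ha
      · exact hvnl (he ▸ l₀.getElem_mem hi')
      · exact hv _ ha.symm
    refine ⟨w, by simpa using hw1, fun j hj hji => ?_⟩
    match j with
    | 0 => exact ⟨hwv, hv w⟩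
    | (j+1) =>
      have hj' : j < l₀.length := by simp at hj; omega
      have := hw2 j (by simp; omega) (by omega)
      rw [List.getElem_append_left hj'] at this
      simpa using this

lemma grundy_of_eq_length {l l' : List V} (hl : IsGrundyDomSeq G l)
    (h : IsClosedNbrSeq G l') (hlen : l'.length = l.length) : IsGrundyDomSeq G l' :=
  ⟨h, fun l'' h'' => hlen ▸ hl.2 l'' h''⟩

lemma grundy_sets_eq {l l' : List V} (Hu : ∃! A : Set V, IsGrundyDomSet G A)
    (hl : IsGrundyDomSeq G l) (hl' : IsGrundyDomSeq G l') :
    {v : V | v ∈ l} = {v : V | v ∈ l'} := by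
  obtain ⟨A, _, hA⟩ := Hu
  rw [hA _ ⟨l, hl, rfl⟩, hA _ ⟨l', hl', rfl⟩]

lemma last_isolated (Hu : ∃! A : Set V, IsGrundyDomSet G A) {l₀ : List V} {v : V}
    (hl : IsGrundyDomSeq G (l₀ ++ [v])) : ∀ z, ¬ G.Adj v z := by
  have hc := hl.1
  have hpre := closed_prefix hc
  rw [isClosedNbrSeq_iff'] at hc
  obtain ⟨hn, hfp⟩ := hc
  have hvn : v ∉ l₀ := by
    rw [List.nodup_append'] at hn
    exact fun hx => hn.2.2 hx (by simp)
  obtain ⟨w, hw1, hw2⟩ := hfp l₀.length (by simp)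
  have hz : (l₀ ++ [v])[l₀.length]'(by simp) = v := by simp
  rw [hz] at hw1
  have hw2' : ∀ x ∈ l₀, w ≠ x ∧ ¬ G.Adj x w := by
    intro x hx
    obtain ⟨j, hj, rfl⟩ := List.mem_iff_getElem.mp hx
    have := hw2 j (by simp; omega) hj
    rwa [List.getElem_append_left hj] at this
  have hcw : IsClosedNbrSeq G (l₀ ++ [w]) := closed_snoc hpre (Or.inl rfl) hw2'
  have hgw : IsGrundyDomSeq G (l₀ ++ [w]) := grundy_of_eq_length hl hcw (by simp)
  have hsets := grundy_sets_eq Hu hl hgw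
  have hwv : w = v := by
    have hvmem : v ∈ {x : V | x ∈ l₀ ++ [v]} := by simp
    rw [hsets] at hvmem
    simp only [Set.mem_setOf_eq, List.mem_append, List.mem_singleton] at hvmem
    rcases hvmem with h | h
    · exact absurd h hvn
    · exact h.symm
  subst hwv
  intro z hadj
  have hcz : IsClosedNbrSeq G (l₀ ++ [z]) := closed_snoc hpre (Or.inr hadj.symm) hw2'
  have hgz := grundy_of_eq_length hl hcz (by simp)
  have hsets' := grundy_sets_eq Hu hl hgz
  have hvmem : w ∈ {x : V | x ∈ l₀ ++ [z]} := by rw [← hsets']; simp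
  simp only [Set.mem_setOf_eq, List.mem_append, List.mem_singleton] at hvmem
  rcases hvmem with h | h
  · exact hvn h
  · exact G.irrefl (h ▸ hadj)

lemma all_isolated_aux (Hu : ∃! A : Set V, IsGrundyDomSet G A) :
    ∀ d (l : List V), IsGrundyDomSeq G l →
      ∀ i (hi : i < l.length), i + d + 1 = l.length → ∀ z, ¬ G.Adj l[i] z := by
  intro d
  induction d with
  | zero =>
    intro l hl i hi hlen
    have hne : l ≠ [] := by intro h; rw [h] at hi; simp at hi
    have hdec : l.dropLast ++ [l.getLast hne] = l := List.dropLast_append_getLast hne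
    have he : l[i] = l.getLast hne := by
      rw [List.getLast_eq_getElem]
      congr 1
      omega
    rw [he]
    exact last_isolated Hu (by rwa [hdec])
  | succ d ih =>
    intro l hl i hi hlen
    have hne : l ≠ [] := by intro h; rw [h] at hi; simp at hi
    have hdec : l.dropLast ++ [l.getLast hne] = l := List.dropLast_append_getLast hne
    have hiso : ∀ z, ¬ G.Adj (l.getLast hne) z := last_isolated Hu (by rwa [hdec])
    have hrot : IsClosedNbrSeq G (l.getLast hne :: l.dropLast) :=
      closed_rotate (by rw [hdec]; exact hl.1) hiso
    have hlen' : (l.getLast hne :: l.dropLast).length = l.length := by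
      simp [List.length_dropLast]
      omega
    have hg' : IsGrundyDomSeq G (l.getLast hne :: l.dropLast) :=
      grundy_of_eq_length hl hrot hlen'
    have hi' : i + 1 < (l.getLast hne :: l.dropLast).length := by rw [hlen']; omega
    have := ih (l.getLast hne :: l.dropLast) hg' (i+1) hi' (by rw [hlen']; omega)
    have hidl : i < l.dropLast.length := by simp [List.length_dropLast]; omega
    have he : (l.getLast hne :: l.dropLast)[i+1]'hi' = l[i] := by
      rw [List.getElem_cons_succ, List.getElem_dropLast]
    rwa [he] at this

end Aux

/-- A finite graph has exactly one Grundy dominating set iff it has no edges. -/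
theorem unique_grundyDomSet_iff_no_edges {V : Type*} [Fintype V] (G : SimpleGraph V) :
    (∃! A : Set V, IsGrundyDomSet G A) ↔ G.edgeSet = ∅ := by
  classical
  constructor
  · intro Hu
    obtain ⟨A, ⟨l, hl, hA⟩, -⟩ := id Hu
    have hiso : ∀ x ∈ l, ∀ z, ¬ G.Adj x z := by
      intro x hx
      obtain ⟨i, hi, rfl⟩ := List.mem_iff_getElem.mp hx
      exact all_isolated_aux Hu (l.length - 1 - i) l hl i hi (by omega)
    have hno : ∀ u z, ¬ G.Adj u z := by
      intro u z huz
      by_cases hu : u ∈ l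
      · exact hiso u hu z huz
      · have hc : IsClosedNbrSeq G (l ++ [u]) :=
          closed_snoc hl.1 (Or.inl rfl) (fun x hx => ⟨fun he => hu (he ▸ hx), hiso x hx u⟩)
        have := hl.2 _ hc
        simp at this
    refine Set.eq_empty_iff_forall_notMem.mpr ?_
    refine Sym2.ind (fun u v h => hno u v (G.mem_edgeSet.mp h))
  · intro hE
    have hno : ∀ u v, ¬ G.Adj u v := fun u v h =>
      Set.eq_empty_iff_forall_notMem.mp hE s(u,v) (G.mem_edgeSet.mpr h)
    have hclosed : ∀ l : List V, l.Nodup → IsClosedNbrSeq G l := by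
      intro l hn
      rw [isClosedNbrSeq_iff']
      refine ⟨hn, fun i hi => ⟨l[i], Or.inl rfl, fun j hj hji => ⟨?_, hno _ _⟩⟩⟩
      exact fun he => absurd (hn.getElem_inj_iff.mp he) (by omega)
    set l₀ : List V := (Finset.univ : Finset V).toList with hl₀
    have hn₀ : l₀.Nodup := Finset.nodup_toList _
    have hlen₀ : l₀.length = Fintype.card V := by
      rw [hl₀, Finset.length_toList, Finset.card_univ]
    have hg₀ : IsGrundyDomSeq G l₀ :=
      ⟨hclosed l₀ hn₀, fun l' h' => by rw [hlen₀]; exact h'.1.length_le_card⟩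
    refine ⟨Set.univ, ⟨l₀, hg₀, ?_⟩, ?_⟩
    · ext v
      simp [hl₀, Finset.mem_toList]
    · rintro B ⟨l, hgl, rfl⟩
      have hn : l.Nodup := hgl.1.1
      have hlen : l.length = Fintype.card V := by
        have h1 := hn.length_le_card
        have h2 := hgl.2 l₀ (hclosed l₀ hn₀)
        omega
      have huniv : l.toFinset = Finset.univ := by
        refine Finset.eq_univ_of_card _ ?_
        rw [List.toFinset_card_of_nodup hn, hlen]
      ext v
      simp only [Set.mem_setOf_eq, Set.mem_univ, iff_true]
      have : v ∈ l.toFinset := by rw [huniv]; exact Finset.mem_univ v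
      exact List.mem_toFinset.mp this
end

section
/- A finite simple graph G is an iso-unique Grundy domination graph if and only if each connected component of G is a complete graph. -/
/-- `G` is an iso-unique Grundy domination graph: any two Grundy dominating sets are
mapped to each other by some graph automorphism. -/
def IsoUniqueGrundyDom {V : Type*} (G : SimpleGraph V) : Prop :=
  ∀ A B : Set V, IsGrundyDomSet G A → IsGrundyDomSet G B →
    ∃ φ : G ≃g G, ⇑φ '' A = B

set_option linter.unusedSectionVars false

namespace GrundyAux

variable {V : Type*} (G : SimpleGraph V)

/-- closed neighborhood as a set -/
def nbr (v : V) : Set V := {w | w = v ∨ G.Adj v w}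

variable {G}

lemma nbr_self (v : V) : v ∈ nbr G v := Or.inl rfl

lemma nbr_symm {u v : V} (h : u ∈ nbr G v) : v ∈ nbr G u := by
  rcases h with h | h
  · exact Or.inl h.symm
  · exact Or.inr h.symm

lemma reachable_of_nbr {u v : V} (h : u ∈ nbr G v) : G.Reachable v u := by
  rcases h with h | h
  · rw [h]
  · exact h.reachable

variable (G)

/-- set covered by a list -/
def covL (l : List V) : Set V := {w | ∃ v ∈ l, w ∈ nbr G v}

/-- witness-zipped form of a closed neighborhood sequence -/
def ZOk (z : List (V × V)) : Prop :=
  (∀ p ∈ z, p.2 ∈ nbr G p.1) ∧ z.Pairwise (fun p q => q.2 ∉ nbr G p.1)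

def CS (l : List V) : Prop :=
  ∃ z : List (V × V), z.map Prod.fst = l ∧ l.Nodup ∧ ZOk G z

variable {G}

lemma not_mem_nbr {w v : V} : w ∉ nbr G v ↔ w ≠ v ∧ ¬ G.Adj v w := by
  unfold nbr; simp only [Set.mem_setOf_eq]; tauto

lemma cs_iff {l : List V} : IsClosedNbrSeq G l ↔ CS G l := by
  constructor
  · rintro ⟨hnd, h⟩
    choose ws hws1 hws2 using h
    refine ⟨l.zip (List.ofFn ws), ?_, hnd, ?_, ?_⟩
    · exact List.map_fst_zip (by simp)
    · intro p hp
      obtain ⟨i, hi, rfl⟩ := List.mem_iff_getElem.mp hp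
      have hil : i < l.length := by simpa using hi
      rw [List.getElem_zip]
      simpa [nbr, List.getElem_ofFn] using hws1 ⟨i, hil⟩
    · rw [List.pairwise_iff_getElem]
      intro i j hi hj hij
      have hil : i < l.length := by simpa using hi
      have hjl : j < l.length := by simpa using hj
      rw [List.getElem_zip, List.getElem_zip]
      simp only [List.getElem_ofFn]
      have := hws2 ⟨j, hjl⟩ ⟨i, hil⟩ hij
      rw [not_mem_nbr]
      exact ⟨this.1, this.2⟩
  · rintro ⟨z, rfl, hnd, hmem, hpw⟩
    refine ⟨hnd, ?_⟩
    intro i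
    have hlen : (z.map Prod.fst).length = z.length := by simp
    have hiz : (i : ℕ) < z.length := by have := i.2; omega
    refine ⟨(z[(i:ℕ)]'hiz).2, ?_, ?_⟩
    · have h1 := hmem (z[(i:ℕ)]'hiz) (List.getElem_mem hiz)
      have h2 : (z.map Prod.fst).get i = (z[(i:ℕ)]'hiz).1 := by
        simp [List.getElem_map]
      rw [h2]
      exact h1
    · intro j hji
      have hjz : (j : ℕ) < z.length := by have := j.2; omega
      have := (List.pairwise_iff_getElem.mp hpw) (j : ℕ) (i : ℕ) hjz hiz hji
      have h2 : (z.map Prod.fst).get j = (z[(j:ℕ)]'hjz).1 := by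
        simp [List.getElem_map]
      rw [h2]
      exact (not_mem_nbr.mp this)

lemma cs_snoc {l : List V} {x w : V} (hl : CS G l) (hx : x ∉ l)
    (hw : w ∈ nbr G x) (hw2 : w ∉ covL G l) : CS G (l ++ [x]) := by
  obtain ⟨z, rfl, hnd, hmem, hpw⟩ := hl
  refine ⟨z ++ [(x, w)], by simp, ?_, ?_, ?_⟩
  · simp only [List.nodup_append, List.nodup_cons, List.not_mem_nil, not_false_iff,
      List.nodup_nil, and_true, true_and]
    constructor
    · exact hnd
    · simp only [List.mem_map, not_exists, not_and] at hx
      simpa using fun a b h hab => hx (a, b) h hab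
  · intro p hp
    rcases List.mem_append.mp hp with h | h
    · exact hmem p h
    · simp only [List.mem_singleton] at h
      subst h; exact hw
  · rw [List.pairwise_append]
    refine ⟨hpw, by simp, ?_⟩
    intro p hp q hq
    simp only [List.mem_singleton] at hq
    subst hq
    intro hcon
    exact hw2 ⟨p.1, List.mem_map_of_mem hp, hcon⟩

lemma cs_nil : CS G ([] : List V) := ⟨[], rfl, List.nodup_nil, by simp [ZOk]⟩

lemma exists_grundy [Fintype V] (G : SimpleGraph V) : ∃ l, IsGrundyDomSeq G l := by
  classical
  set S : Set ℕ := {n | ∃ l : List V, IsClosedNbrSeq G l ∧ l.length = n} with hS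
  have h0 : 0 ∈ S := ⟨[], cs_iff.mpr cs_nil, rfl⟩
  have hbdd : BddAbove S := by
    refine ⟨Fintype.card V, ?_⟩
    rintro n ⟨l, hl, rfl⟩
    exact hl.1.length_le_card
  obtain ⟨l, hl, hlen⟩ := Nat.sSup_mem ⟨0, h0⟩ hbdd
  exact ⟨l, hl, fun l' hl' => hlen ▸ le_csSup hbdd ⟨l', hl', rfl⟩⟩

lemma grundy_dominates {l : List V} (hl : IsGrundyDomSeq G l) (x : V) :
    x ∈ covL G l := by
  by_contra hx
  have hxl : x ∉ l := fun h => hx ⟨x, h, nbr_self x⟩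
  have : CS G (l ++ [x]) := cs_snoc (cs_iff.mp hl.1) hxl (nbr_self x) hx
  have := hl.2 _ (cs_iff.mpr this)
  simp at this


section EC
variable {V : Type*} [Fintype V] (G : SimpleGraph V)

/-- number of ordered adjacent pairs inside a set -/
noncomputable def eC (A : Set V) : ℕ := {p : V × V | p.1 ∈ A ∧ p.2 ∈ A ∧ G.Adj p.1 p.2}.ncard

variable {G}

lemma eC_iso (φ : G ≃g G) (A : Set V) : eC G (⇑φ '' A) = eC G A := by
  have himg : {p : V × V | p.1 ∈ ⇑φ '' A ∧ p.2 ∈ ⇑φ '' A ∧ G.Adj p.1 p.2}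
      = (fun p : V × V => (φ p.1, φ p.2)) '' {p | p.1 ∈ A ∧ p.2 ∈ A ∧ G.Adj p.1 p.2} := by
    ext ⟨x, y⟩
    constructor
    · rintro ⟨⟨a, ha, rfl⟩, ⟨b, hb, rfl⟩, hadj⟩
      exact ⟨(a, b), ⟨ha, hb, φ.map_adj_iff.mp hadj⟩, rfl⟩
    · rintro ⟨⟨a, b⟩, ⟨ha, hb, hadj⟩, h⟩
      obtain ⟨h1, h2⟩ := Prod.mk.injEq .. ▸ h
      subst h1; subst h2
      exact ⟨⟨a, ha, rfl⟩, ⟨b, hb, rfl⟩, φ.map_adj_iff.mpr hadj⟩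
  rw [eC, himg, Set.ncard_image_of_injective]
  · rfl
  · intro p q hpq
    simp only [Prod.mk.injEq] at hpq
    exact Prod.ext (φ.injective hpq.1) (φ.injective hpq.2)

lemma eC_insert (A : Set V) (t : V) (ht : t ∉ A) :
    eC G (insert t A) = eC G A + 2 * (A ∩ {p | G.Adj t p}).ncard := by
  classical
  set N : Set V := A ∩ {p | G.Adj t p} with hN
  have hdecomp : {p : V × V | p.1 ∈ insert t A ∧ p.2 ∈ insert t A ∧ G.Adj p.1 p.2}
      = {p : V × V | p.1 ∈ A ∧ p.2 ∈ A ∧ G.Adj p.1 p.2}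
        ∪ ((fun x => (t, x)) '' N ∪ (fun x => (x, t)) '' N) := by
    ext ⟨x, y⟩
    simp only [Set.mem_setOf_eq, Set.mem_insert_iff, Set.mem_union, Set.mem_image, hN,
      Set.mem_inter_iff]
    constructor
    · rintro ⟨hx | hx, hy | hy, hadj⟩
      · subst hx; subst hy; exact absurd hadj (G.irrefl)
      · subst hx; exact Or.inr (Or.inl ⟨y, ⟨hy, hadj⟩, rfl⟩)
      · subst hy; exact Or.inr (Or.inr ⟨x, ⟨hx, hadj.symm⟩, rfl⟩)
      · exact Or.inl ⟨hx, hy, hadj⟩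
    · rintro (⟨hx, hy, hadj⟩ | (⟨a, ⟨ha, hadj⟩, heq⟩ | ⟨a, ⟨ha, hadj⟩, heq⟩))
      · exact ⟨Or.inr hx, Or.inr hy, hadj⟩
      · obtain ⟨h1, h2⟩ := Prod.mk.injEq .. ▸ heq
        subst h1; subst h2; exact ⟨Or.inl rfl, Or.inr ha, hadj⟩
      · obtain ⟨h1, h2⟩ := Prod.mk.injEq .. ▸ heq
        subst h1; subst h2; exact ⟨Or.inr ha, Or.inl rfl, hadj.symm⟩
  have hinj1 : Function.Injective (fun x : V => (t, x)) := by
    intro a b h; simpa using h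
  have hinj2 : Function.Injective (fun x : V => (x, t)) := by
    intro a b h; simpa using h
  have hd1 : Disjoint {p : V × V | p.1 ∈ A ∧ p.2 ∈ A ∧ G.Adj p.1 p.2}
      ((fun x => (t, x)) '' N ∪ (fun x => (x, t)) '' N) := by
    rw [Set.disjoint_left]
    rintro ⟨x, y⟩ ⟨hx, hy, _⟩ (⟨a, _, heq⟩ | ⟨a, _, heq⟩)
    · obtain ⟨h1, h2⟩ := Prod.mk.injEq .. ▸ heq
      exact ht (h1 ▸ hx)
    · obtain ⟨h1, h2⟩ := Prod.mk.injEq .. ▸ heq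
      exact ht (h2 ▸ hy)
  have hd2 : Disjoint ((fun x : V => (t, x)) '' N) ((fun x : V => (x, t)) '' N) := by
    rw [Set.disjoint_left]
    rintro ⟨x, y⟩ ⟨a, ha, heq⟩ ⟨b, hb, heq'⟩
    obtain ⟨h1, h2⟩ := Prod.mk.injEq .. ▸ heq
    obtain ⟨h3, h4⟩ := Prod.mk.injEq .. ▸ heq'
    subst h1
    have : b = t := h3
    exact ht (this ▸ hb.1)
  rw [eC, eC, hdecomp, Set.ncard_union_eq hd1 (Set.toFinite _) (Set.toFinite _),
    Set.ncard_union_eq hd2 (Set.toFinite _) (Set.toFinite _),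
    Set.ncard_image_of_injective _ hinj1, Set.ncard_image_of_injective _ hinj2]
  ring


end EC

section Backward

lemma rtrans (hcc : ∀ u v : V, G.Reachable u v → u ≠ v → G.Adj u v) {a b c : V}
    (hb : b ∈ nbr G a) (hc : c ∈ nbr G b) : c ∈ nbr G a := by
  by_cases h : c = a
  · exact Or.inl h
  · exact Or.inr (hcc a c ((reachable_of_nbr hb).trans (reachable_of_nbr hc)) (Ne.symm h))

lemma pairwise_not_nbr (hcc : ∀ u v : V, G.Reachable u v → u ≠ v → G.Adj u v) {l : List V}
    (hl : IsClosedNbrSeq G l) :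
    l.Pairwise (fun a b => b ∉ nbr G a) := by
  obtain ⟨z, hmap, hnd, hmem, hpw⟩ := cs_iff.mp hl
  rw [← hmap, List.pairwise_map]
  refine hpw.imp_of_mem ?_
  intro p q hp hq hR hc
  exact hR (rtrans hcc hc (hmem q hq))

lemma sep_of_grundy (hcc : ∀ u v : V, G.Reachable u v → u ≠ v → G.Adj u v) {l : List V}
    (hl : IsGrundyDomSeq G l) :
    (∀ v : V, ∃ a ∈ l, v ∈ nbr G a) ∧
    (∀ a ∈ l, ∀ b ∈ l, b ∈ nbr G a → a = b) := by
  have hsym : Symmetric (fun a b : V => b ∉ nbr G a) := by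
    intro x y h hc
    exact h (nbr_symm hc)
  constructor
  · intro v
    exact grundy_dominates hl v
  · intro a ha b hb hab
    by_contra hne
    haveI : Std.Symm (fun a b : V => b ∉ nbr G a) := ⟨fun a b h => hsym h⟩
    exact (List.Pairwise.forall (pairwise_not_nbr hcc hl.1) ha hb hne) hab

lemma backward_dir (G : SimpleGraph V)
    (hcc : ∀ u v : V, G.Reachable u v → u ≠ v → G.Adj u v) :
    IsoUniqueGrundyDom G := by
  classical
  rintro A B ⟨la, hla, rfl⟩ ⟨lb, hlb, rfl⟩
  obtain ⟨domA, uniqA⟩ := sep_of_grundy hcc hla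
  obtain ⟨domB, uniqB⟩ := sep_of_grundy hcc hlb
  set repA : V → V := fun v => (domA v).choose with hrepA
  set repB : V → V := fun v => (domB v).choose with hrepB
  have repA_mem : ∀ v, repA v ∈ la := fun v => (domA v).choose_spec.1
  have repA_nbr : ∀ v, v ∈ nbr G (repA v) := fun v => (domA v).choose_spec.2
  have repB_mem : ∀ v, repB v ∈ lb := fun v => (domB v).choose_spec.1
  have repB_nbr : ∀ v, v ∈ nbr G (repB v) := fun v => (domB v).choose_spec.2
  have repA_class : ∀ v w, w ∈ nbr G v → repA w = repA v := by
    intro v w hw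
    refine uniqA _ (repA_mem w) _ (repA_mem v) ?_
    have h3 : repA v ∈ nbr G v := nbr_symm (repA_nbr v)
    have h4 : repA v ∈ nbr G w := rtrans hcc (nbr_symm hw) h3
    exact rtrans hcc (repA_nbr w) h4
  have repB_class : ∀ v w, w ∈ nbr G v → repB w = repB v := by
    intro v w hw
    refine uniqB _ (repB_mem w) _ (repB_mem v) ?_
    have h3 : repB v ∈ nbr G v := nbr_symm (repB_nbr v)
    have h4 : repB v ∈ nbr G w := rtrans hcc (nbr_symm hw) h3
    exact rtrans hcc (repB_nbr w) h4
  have repA_fix : ∀ a ∈ la, repA a = a := by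
    intro a ha
    exact uniqA _ (repA_mem a) _ ha (repA_nbr a)
  have repB_fix : ∀ b ∈ lb, repB b = b := by
    intro b hb
    exact uniqB _ (repB_mem b) _ hb (repB_nbr b)
  set f : V → V := fun v => if v = repA v then repB v else if v = repB v then repA v else v
    with hf
  have fA : ∀ v, v = repA v → f v = repB v := by
    intro v h
    simp only [hf]
    rw [if_pos h]
  have fB : ∀ v, ¬ v = repA v → v = repB v → f v = repA v := by
    intro v h1 h2
    simp only [hf]
    rw [if_neg h1, if_pos h2]
  have fC : ∀ v, ¬ v = repA v → ¬ v = repB v → f v = v := by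
    intro v h1 h2
    simp only [hf]
    rw [if_neg h1, if_neg h2]
  have hclass : ∀ v, v ∈ nbr G (f v) := by
    intro v
    by_cases h1 : v = repA v
    · rw [fA v h1]; exact repB_nbr v
    · by_cases h2 : v = repB v
      · rw [fB v h1 h2]; exact repA_nbr v
      · rw [fC v h1 h2]; exact nbr_self v
  have invol : ∀ v, f (f v) = v := by
    intro v
    by_cases h1 : v = repA v
    · rw [fA v h1]
      by_cases h3 : repB v = v
      · rw [h3, fA v h1]; exact h3
      · have e2 : repA (repB v) = repA v := repA_class v (repB v) (nbr_symm (repB_nbr v))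
        have hno : ¬ (repB v = repA (repB v)) := by rw [e2, ← h1]; exact h3
        have e1 : repB (repB v) = repB v := repB_fix _ (repB_mem v)
        rw [fB (repB v) hno e1.symm, e2, ← h1]
    · by_cases h2 : v = repB v
      · rw [fB v h1 h2]
        have e1 : repA (repA v) = repA v := repA_fix _ (repA_mem v)
        have e3 : repB (repA v) = repB v := repB_class v (repA v) (nbr_symm (repA_nbr v))
        rw [fA (repA v) e1.symm, e3, ← h2]
      · rw [fC v h1 h2, fC v h1 h2]
  have finj : Function.Injective f := by
    intro a b hab
    have := congrArg f hab
    rwa [invol, invol] at this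
  have hAdj : ∀ u v : V, G.Adj u v → G.Adj (f u) (f v) := by
    intro u v huv
    have hne : f u ≠ f v := fun hcon => huv.ne (finj hcon)
    refine hcc _ _ ?_ hne
    have r1 : G.Reachable (f u) u := reachable_of_nbr (hclass u)
    have r2 : G.Reachable v (f v) := (reachable_of_nbr (hclass v)).symm
    exact (r1.trans huv.reachable).trans r2
  have hiff : ∀ a b : V, G.Adj (f a) (f b) ↔ G.Adj a b := by
    intro a b
    constructor
    · intro h'
      have h2 := hAdj _ _ h'
      rwa [invol a, invol b] at h2
    · exact hAdj a b
  refine ⟨⟨⟨f, f, invol, invol⟩, @fun a b => hiff a b⟩, ?_⟩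
  ext x
  simp only [Set.mem_image, Set.mem_setOf_eq, RelIso.coe_fn_mk, Equiv.coe_fn_mk]
  constructor
  · rintro ⟨a, ha, rfl⟩
    rw [fA a (repA_fix a ha).symm]
    exact repB_mem a
  · intro hb
    refine ⟨repA x, repA_mem x, ?_⟩
    have h1 : repA (repA x) = repA x := repA_fix _ (repA_mem x)
    rw [fA _ h1.symm, repB_class x (repA x) (nbr_symm (repA_nbr x)), repB_fix x hb]

end Backward

section Forward
variable [Fintype V]

lemma walk_closed {S : Set V} (hS : ∀ u r, u ∈ S → G.Adj u r → r ∈ S) :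
    ∀ {a b : V}, G.Walk a b → a ∈ S → b ∈ S := by
  intro a b w
  induction w with
  | nil => exact id
  | cons h p ih => exact fun ha => ih (hS _ _ ha h)

lemma forward_dir (G : SimpleGraph V) (h : IsoUniqueGrundyDom G) :
    ∀ u v : V, G.Reachable u v → u ≠ v → G.Adj u v := by
  classical
  intro u₀ v₀ hr hne
  by_contra hnadj
  obtain ⟨l₀, hl₀cs, hl₀max⟩ := exists_grundy G
  obtain ⟨z₀, hz₀map, hz₀nd, hz₀mem, hz₀pw⟩ := cs_iff.mp hl₀cs
  set n := l₀.length with hn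
  have hz₀len : z₀.length = n := by rw [hn, ← hz₀map, List.length_map]
  set C : Set V := {v | G.Reachable u₀ v} with hC
  -- reorder: C-part first
  set p : V × V → Bool := fun q => decide (q.1 ∈ C) with hp
  set zC := z₀.filter p with hzC
  set zR := z₀.filter (fun x => !p x) with hzR
  set z := zC ++ zR with hzdef
  have hperm : List.Perm z z₀ := List.filter_append_perm p z₀
  have hzmem : ∀ q ∈ z, q.2 ∈ nbr G q.1 := fun q hq => hz₀mem q (hperm.mem_iff.mp hq)
  have hzpw : z.Pairwise (fun p q => q.2 ∉ nbr G p.1) := by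
    rw [hzdef, List.pairwise_append]
    refine ⟨hz₀pw.sublist (z₀.filter_sublist), hz₀pw.sublist (z₀.filter_sublist), ?_⟩
    intro a ha b hb
    have haC : a.1 ∈ C := by
      have := List.of_mem_filter ha
      rw [hp] at this
      exact of_decide_eq_true this
    have hbC : b.1 ∉ C := by
      have := List.of_mem_filter hb
      rw [hp] at this
      simp only [Bool.not_eq_true', decide_eq_false_iff_not] at this
      exact this
    intro hcon
    apply hbC
    have hb2 : b.2 ∈ nbr G b.1 := hz₀mem b (List.mem_of_mem_filter hb)
    have r1 : G.Reachable u₀ a.1 := haC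
    have r2 : G.Reachable a.1 b.2 := reachable_of_nbr hcon
    have r3 : G.Reachable b.2 b.1 := (reachable_of_nbr hb2).symm
    exact (r1.trans r2).trans r3
  have hznd : (z.map Prod.fst).Nodup := by
    refine ((hperm.map Prod.fst).nodup_iff).mpr ?_
    rw [hz₀map]
    exact hl₀cs.1
  have hzlen : z.length = n := by rw [hperm.length_eq, hz₀len]
  -- the reordered sequence l and its maximality
  have hlcs : IsClosedNbrSeq G (z.map Prod.fst) := cs_iff.mpr ⟨z, rfl, hznd, hzmem, hzpw⟩
  have hllen : (z.map Prod.fst).length = n := by rw [List.length_map, hzlen]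
  have hlmax : ∀ l', IsClosedNbrSeq G l' → l'.length ≤ n := fun l' h' => hl₀max l' h'
  -- zC is nonempty
  have hzCne : zC ≠ [] := by
    obtain ⟨a, hal₀, hu₀nbr⟩ := grundy_dominates ⟨hl₀cs, hl₀max⟩ u₀
    rw [← hz₀map] at hal₀
    obtain ⟨q, hq, hq1⟩ := List.mem_map.mp hal₀
    have hqC : q ∈ zC := by
      rw [hzC]
      refine List.mem_filter.mpr ⟨hq, ?_⟩
      rw [hp]
      refine decide_eq_true ?_
      rw [hq1, hC]
      exact (reachable_of_nbr hu₀nbr).symm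
    intro hcon
    rw [hcon] at hqC
    exact List.not_mem_nil hqC
  obtain ⟨q₁, zC', hzCeq⟩ := List.exists_cons_of_ne_nil hzCne
  set zt := zC' ++ zR with hzt
  have hz : z = q₁ :: zt := by rw [hzdef, hzCeq, hzt, List.cons_append]
  set v₁ := q₁.1 with hv₁
  have hv₁C : v₁ ∈ C := by
    have : q₁ ∈ zC := by rw [hzCeq]; exact List.mem_cons_self
    have := List.of_mem_filter this
    rw [hp] at this
    exact of_decide_eq_true this
  have hztlen : zt.length = n - 1 := by
    have : z.length = zt.length + 1 := by rw [hz]; simp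
    omega
  have hn1 : 1 ≤ n := by
    have : z.length = zt.length + 1 := by rw [hz]; simp
    omega
  -- head relations and tail pairwise
  have hcons := List.pairwise_cons.mp (hz ▸ hzpw)
  have hhead : ∀ q ∈ zt, q.2 ∉ nbr G v₁ := fun q hq => hcons.1 q hq
  have hztpw : zt.Pairwise (fun p q => q.2 ∉ nbr G p.1) := hcons.2
  have hztmem : ∀ q ∈ zt, q.2 ∈ nbr G q.1 := by
    intro q hq
    refine hzmem q ?_
    rw [hz]
    exact List.mem_cons_of_mem q₁ hq
  -- the reversed witness prefix
  set zP := (zt.reverse).map Prod.swap with hzP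
  set P := zP.map Prod.fst with hP
  have hPlen : P.length = n - 1 := by
    rw [hP, hzP]
    simp [hztlen]
  have hPelts : ∀ w ∈ P, ∃ q ∈ zt, w = q.2 := by
    intro w hw
    rw [hP] at hw
    obtain ⟨pr, hpr, hpr1⟩ := List.mem_map.mp hw
    rw [hzP] at hpr
    obtain ⟨q, hq, hq1⟩ := List.mem_map.mp hpr
    refine ⟨q, List.mem_reverse.mp hq, ?_⟩
    rw [← hpr1, ← hq1]
    rfl
  have hPelts' : ∀ q ∈ zt, q.2 ∈ P := by
    intro q hq
    rw [hP, hzP]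
    refine List.mem_map.mpr ⟨q.swap, ?_, rfl⟩
    exact List.mem_map.mpr ⟨q, List.mem_reverse.mpr hq, rfl⟩
  have hPcs : CS G P := by
    refine ⟨zP, rfl, ?_, ?_, ?_⟩
    · show (zP.map Prod.fst).Pairwise (· ≠ ·)
      rw [List.pairwise_map]
      rw [hzP, List.pairwise_map, List.pairwise_reverse]
      refine hztpw.imp_of_mem ?_
      intro a b ha hb hR
      show b.swap.1 ≠ a.swap.1
      intro hcon
      apply hR
      show b.2 ∈ nbr G a.1
      have : b.2 = a.2 := hcon
      rw [this]
      exact hztmem a ha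
    · intro pr hpr
      rw [hzP] at hpr
      obtain ⟨q, hq, hq1⟩ := List.mem_map.mp hpr
      rw [← hq1]
      show q.swap.2 ∈ nbr G q.swap.1
      exact nbr_symm (hztmem q (List.mem_reverse.mp hq))
    · rw [hzP, List.pairwise_map, List.pairwise_reverse]
      refine hztpw.imp_of_mem ?_
      intro a b ha hb hR
      show a.swap.2 ∉ nbr G b.swap.1
      intro hcon
      exact hR (nbr_symm hcon)
  have hv₁_uncov : v₁ ∉ covL G P := by
    rintro ⟨w, hwP, hv₁nbr⟩
    obtain ⟨q, hq, rfl⟩ := hPelts w hwP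
    exact hhead q hq (nbr_symm hv₁nbr)
  have hPsubcov : ∀ w ∈ P, w ∈ covL G P := fun w hw => ⟨w, hw, nbr_self w⟩
  have hv₁P : v₁ ∉ P := fun hcon => hv₁_uncov (hPsubcov v₁ hcon)
  set Pset : Set V := {v : V | v ∈ P} with hPset
  -- key finals lemma
  have key : ∀ t, t ∉ P → (∃ w, w ∈ nbr G t ∧ w ∉ covL G P) →
      ∀ s ∈ P, ¬ G.Adj t s := by
    intro t htP ⟨w, hw1, hw2⟩
    have hcst : CS G (P ++ [t]) := cs_snoc hPcs htP hw1 hw2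
    have hcsv : CS G (P ++ [v₁]) := cs_snoc hPcs hv₁P (nbr_self v₁) hv₁_uncov
    have hlent : (P ++ [t]).length = n := by simp [hPlen]; omega
    have hlenv : (P ++ [v₁]).length = n := by simp [hPlen]; omega
    have hgr_t : IsGrundyDomSeq G (P ++ [t]) :=
      ⟨cs_iff.mpr hcst, fun l' h' => hlent ▸ hlmax l' h'⟩
    have hgr_v : IsGrundyDomSeq G (P ++ [v₁]) :=
      ⟨cs_iff.mpr hcsv, fun l' h' => hlenv ▸ hlmax l' h'⟩
    obtain ⟨φ, hφ⟩ := h {v | v ∈ P ++ [t]} {v | v ∈ P ++ [v₁]}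
      ⟨P ++ [t], hgr_t, rfl⟩ ⟨P ++ [v₁], hgr_v, rfl⟩
    have hAt : {v : V | v ∈ P ++ [t]} = insert t Pset := by
      ext x
      simp only [Set.mem_setOf_eq, List.mem_append, List.mem_singleton, Set.mem_insert_iff,
        hPset]
      tauto
    have hAv : {v : V | v ∈ P ++ [v₁]} = insert v₁ Pset := by
      ext x
      simp only [Set.mem_setOf_eq, List.mem_append, List.mem_singleton, Set.mem_insert_iff,
        hPset]
      tauto
    have htns : t ∉ Pset := htP
    have hvns : v₁ ∉ Pset := hv₁P
    have heq : eC G (insert t Pset) = eC G (insert v₁ Pset) := by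
      rw [← hAt, ← hAv, ← hφ, eC_iso]
    rw [eC_insert _ _ htns, eC_insert _ _ hvns] at heq
    have hv₁empty : Pset ∩ {q : V | G.Adj v₁ q} = ∅ := by
      ext q
      simp only [Set.mem_inter_iff, Set.mem_setOf_eq, Set.mem_empty_iff_false, iff_false,
        not_and, hPset]
      intro hq hadj
      exact hv₁_uncov ⟨q, hq, Or.inr hadj.symm⟩
    rw [hv₁empty] at heq
    simp only [Set.ncard_empty, mul_zero, add_zero] at heq
    have hzero : (Pset ∩ {q : V | G.Adj t q}).ncard = 0 := by omega
    have hempty : Pset ∩ {q : V | G.Adj t q} = ∅ :=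
      (Set.ncard_eq_zero (Set.toFinite _)).mp hzero
    intro s hs hadj
    have : s ∈ Pset ∩ {q : V | G.Adj t q} := ⟨hs, hadj⟩
    rw [hempty] at this
    exact this
  -- uncovered vertices form a clique
  have clique : ∀ u u', u ∉ covL G P → u' ∉ covL G P → u ≠ u' → G.Adj u u' := by
    intro u u' hu hu' hne'
    by_contra hnadj'
    have huP : u ∉ P := fun hcon => hu (hPsubcov u hcon)
    have hcs1 : CS G (P ++ [u]) := cs_snoc hPcs huP (nbr_self u) hu
    have hu'Pu : u' ∉ P ++ [u] := by
      intro hcon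
      rcases List.mem_append.mp hcon with hcon | hcon
      · exact hu' (hPsubcov u' hcon)
      · rw [List.mem_singleton] at hcon
        exact hne'.symm hcon
    have hu'cov : u' ∉ covL G (P ++ [u]) := by
      rintro ⟨vv, hvv, hnb⟩
      rcases List.mem_append.mp hvv with hvv | hvv
      · exact hu' ⟨vv, hvv, hnb⟩
      · rw [List.mem_singleton] at hvv
        subst hvv
        rcases hnb with hnb | hnb
        · exact hne'.symm hnb
        · exact hnadj' hnb
    have hcs2 : CS G ((P ++ [u]) ++ [u']) := cs_snoc hcs1 hu'Pu (nbr_self u') hu'cov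
    have := hlmax _ (cs_iff.mpr hcs2)
    simp only [List.length_append, List.length_singleton, hPlen] at this
    omega
  -- uncovered set is closed under adjacency
  have uclosed : ∀ u r, u ∉ covL G P → G.Adj u r → r ∉ covL G P := by
    intro u r hu hadj hrcov
    obtain ⟨q, hqP, hrnbr⟩ := hrcov
    have huP : u ∉ P := fun hcon => hu (hPsubcov u hcon)
    by_cases hrP : r ∈ P
    · exact key u huP ⟨u, nbr_self u, hu⟩ r hrP hadj
    · have hkey := key r hrP ⟨u, Or.inr hadj.symm, hu⟩
      rcases hrnbr with hrnbr | hrnbr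
      · exact hrP (hrnbr ▸ hqP)
      · exact hkey q hqP hrnbr.symm
  -- conclude
  have hclosed : ∀ u r, u ∈ {y : V | y ∉ covL G P} → G.Adj u r → r ∈ {y : V | y ∉ covL G P} :=
    fun u r hu hadj => uclosed u r hu hadj
  have hreach : ∀ x, G.Reachable v₁ x → x ∉ covL G P := by
    intro x hx
    obtain ⟨wk⟩ := hx
    exact walk_closed hclosed wk hv₁_uncov
  have hu₀ : u₀ ∉ covL G P := hreach u₀ hv₁C.symm
  have hv₀ : v₀ ∉ covL G P := hreach v₀ (hv₁C.symm.trans hr)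
  exact hnadj (clique u₀ v₀ hu₀ hv₀ hne)

end Forward
end GrundyAux

/-- A finite graph is an iso-unique Grundy domination graph iff each of its connected
components is a complete graph. -/
theorem isoUniqueGrundyDom_iff_components_complete {V : Type*} [Fintype V]
    (G : SimpleGraph V) :
    IsoUniqueGrundyDom G ↔ ∀ u v : V, G.Reachable u v → u ≠ v → G.Adj u v := by
  exact ⟨GrundyAux.forward_dir G, GrundyAux.backward_dir G⟩
end

section
/- If G is a finite simple graph with at least one edge and x is a vertex of G that is not isolated, then there exists a Grundy total dominating sequence of G (that is, an open neighborhood sequence of maximum length) whose set of vertices contains x. -/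
/-- An open neighborhood sequence in `G`: a list of distinct vertices such that each
vertex has a neighbor which is not a neighbor of any earlier vertex. -/
def IsOpenNbrSeq {V : Type*} (G : SimpleGraph V) (l : List V) : Prop :=
  l.Nodup ∧ ∀ i : Fin l.length, ∃ w : V, G.Adj (l.get i) w ∧
    ∀ j : Fin l.length, (j : ℕ) < (i : ℕ) → ¬ G.Adj (l.get j) w

/-- The Grundy total domination number of `G`: the maximum length of an open
neighborhood sequence in `G`. -/
noncomputable def grundyTotalNum {V : Type*} (G : SimpleGraph V) : ℕ :=
  sSup {k : ℕ | ∃ l : List V, IsOpenNbrSeq G l ∧ l.length = k}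

/-- A Grundy total dominating sequence: an open neighborhood sequence of maximum
length. -/
def IsGrundyTotalDomSeq {V : Type*} (G : SimpleGraph V) (l : List V) : Prop :=
  IsOpenNbrSeq G l ∧ ∀ l' : List V, IsOpenNbrSeq G l' → l'.length ≤ l.length

/-- A Grundy total dominating set of `G`: the set of vertices of some Grundy total
dominating sequence of `G`. -/
def IsGrundyTotalDomSet {V : Type*} (G : SimpleGraph V) (A : Set V) : Prop :=
  ∃ l : List V, IsGrundyTotalDomSeq G l ∧ {v : V | v ∈ l} = A

/-- `G` is an iso-unique Grundy total domination graph: any two Grundy total dominating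
sets are mapped to each other by some graph automorphism. -/
def IsoUniqueGrundyTotalDom {V : Type*} (G : SimpleGraph V) : Prop :=
  ∀ A B : Set V, IsGrundyTotalDomSet G A → IsGrundyTotalDomSet G B →
    ∃ φ : G ≃g G, ⇑φ '' A = B

/-- If `G` is a finite graph with at least one edge and `x` is a non-isolated vertex of
`G`, then there exists a Grundy total dominating sequence of `G` containing `x`. -/
theorem exists_grundyTotalDomSeq_containing {V : Type*} [Fintype V] (G : SimpleGraph V)
    (hG : G.edgeSet.Nonempty) (x : V) (hx : ∃ y : V, G.Adj x y) :
    ∃ l : List V, IsGrundyTotalDomSeq G l ∧ x ∈ l := by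
  classical
  obtain ⟨y, hxy⟩ := hx
  set S := {k : ℕ | ∃ l : List V, IsOpenNbrSeq G l ∧ l.length = k} with hS
  have hone : (1 : ℕ) ∈ S := by
    refine ⟨[x], ⟨List.nodup_singleton x, ?_⟩, rfl⟩
    intro i
    refine ⟨y, ?_, ?_⟩
    · have : [x].get i = x := by
        rw [List.get_eq_getElem, List.getElem_singleton]
      rw [this]; exact hxy
    · intro j hj
      have h1 : (j : ℕ) < 1 := j.isLt
      have h2 : (i : ℕ) < 1 := i.isLt
      exact absurd hj (by omega)
  have hbdd : BddAbove S := by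
    refine ⟨Fintype.card V, fun k hk => ?_⟩
    obtain ⟨l, hl, rfl⟩ := hk
    exact hl.1.length_le_card
  obtain ⟨l, hl, hlen⟩ := Nat.sSup_mem ⟨1, hone⟩ hbdd
  have hmax : ∀ l' : List V, IsOpenNbrSeq G l' → l'.length ≤ l.length := by
    intro l' h
    rw [hlen]
    exact le_csSup hbdd ⟨l', h, rfl⟩
  by_cases hxl : x ∈ l
  · exact ⟨l, ⟨hl, hmax⟩, hxl⟩
  obtain ⟨hnd, hwit⟩ := hl
  -- every neighbor of x is adjacent to some vertex of l
  have hP : ∀ w : V, G.Adj x w → ∃ j : Fin l.length, G.Adj (l.get j) w := by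
    by_contra h
    push_neg at h
    obtain ⟨w, hw, hnw⟩ := h
    have hons : IsOpenNbrSeq G (l ++ [x]) := by
      constructor
      · simp [List.nodup_append, hnd, hxl]
        rintro a ha rfl
        exact hxl ha
      · intro a
        have ha : (a : ℕ) < l.length + 1 := by simpa using a.isLt
        rcases lt_or_eq_of_le (Nat.lt_succ_iff.mp ha) with ha' | ha'
        · obtain ⟨w', hw1, hw2⟩ := hwit ⟨a, ha'⟩
          refine ⟨w', ?_, ?_⟩
          · simpa [List.get_eq_getElem, List.getElem_append_left ha'] using hw1
          · intro j hj
            have hj' : (j : ℕ) < l.length := lt_trans hj ha'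
            have : (l ++ [x]).get j = l.get ⟨j, hj'⟩ := by
              simp [List.get_eq_getElem, List.getElem_append_left hj']
            rw [this]
            exact hw2 ⟨j, hj'⟩ (by show (j : ℕ) < (a : ℕ); omega)
        · refine ⟨w, ?_, ?_⟩
          · have : (l ++ [x]).get a = x := by
              simp only [List.get_eq_getElem]
              exact List.getElem_concat_length ha' a.isLt
            rw [this]; exact hw
          · intro j hj
            have hj' : (j : ℕ) < l.length := by omega
            have : (l ++ [x]).get j = l.get ⟨j, hj'⟩ := by
              simp [List.get_eq_getElem, List.getElem_append_left hj']
            rw [this]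
            exact hnw ⟨j, hj'⟩
    have h1 := hmax _ hons
    simp at h1
  -- minimal i such that the first i+1 vertices of l dominate N(x)
  have hQex : ∃ n : ℕ, ∀ w : V, G.Adj x w →
      ∃ j : Fin l.length, (j : ℕ) ≤ n ∧ G.Adj (l.get j) w := by
    refine ⟨l.length, fun w hw => ?_⟩
    obtain ⟨j, hj⟩ := hP w hw
    exact ⟨j, le_of_lt j.isLt, hj⟩
  obtain ⟨i, hQi, hmin⟩ : ∃ i : ℕ, (∀ w : V, G.Adj x w →
      ∃ j : Fin l.length, (j : ℕ) ≤ i ∧ G.Adj (l.get j) w) ∧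
      ∀ m : ℕ, m < i → ¬ (∀ w : V, G.Adj x w →
        ∃ j : Fin l.length, (j : ℕ) ≤ m ∧ G.Adj (l.get j) w) :=
    ⟨Nat.find hQex, Nat.find_spec hQex, fun m hm => Nat.find_min hQex hm⟩
  have hlpos : 0 < l.length := by
    obtain ⟨j, _, _⟩ := hQi y hxy
    exact lt_of_le_of_lt (Nat.zero_le _) j.isLt
  have hi : i < l.length := by
    by_contra hc
    refine hmin (l.length - 1) (by omega) (fun w hw => ?_)
    obtain ⟨j, hj⟩ := hP w hw
    exact ⟨j, by have := j.isLt; omega, hj⟩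
  -- the special witness u
  have hu : ∃ u : V, G.Adj x u ∧ G.Adj (l.get ⟨i, hi⟩) u ∧
      ∀ j : Fin l.length, (j : ℕ) < i → ¬ G.Adj (l.get j) u := by
    rcases Nat.eq_zero_or_pos i with h0 | h0
    · obtain ⟨j, hj1, hj2⟩ := hQi y hxy
      have hji : j = ⟨i, hi⟩ := by ext; simp; omega
      subst hji
      exact ⟨y, hxy, hj2, fun j' hj' => absurd hj' (by omega)⟩
    · have hnQ := hmin (i - 1) (by omega)
      push_neg at hnQ
      obtain ⟨u, hu1, hu2⟩ := hnQ
      obtain ⟨j, hj1, hj2⟩ := hQi u hu1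
      have hji : (j : ℕ) = i := by
        by_contra hne
        exact hu2 j (by omega) hj2
      have : j = ⟨i, hi⟩ := by ext; simpa using hji
      subst this
      exact ⟨u, hu1, hj2, fun j' hj' => hu2 j' (by omega)⟩
  obtain ⟨u, hu1, hu2, hu3⟩ := hu
  -- the new list: replace the i-th vertex of l by x
  set l' := l.set i x with hl'def
  have hlen' : l'.length = l.length := List.length_set
  have hget : ∀ (n : ℕ) (h : n < l'.length), l'[n]'h = if i = n then x else l[n]'(by omega) :=
    fun n h => List.getElem_set h
  have hnd' : l'.Nodup := by
    rw [List.Nodup, List.pairwise_iff_getElem]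
    intro a b ha hb hab
    rw [hget a ha, hget b hb]
    by_cases hia : i = a <;> by_cases hib : i = b
    · omega
    · rw [if_pos hia, if_neg hib]
      intro hc
      exact hxl (hc ▸ List.getElem_mem (by omega))
    · rw [if_neg hia, if_pos hib]
      intro hc
      exact hxl (hc ▸ List.getElem_mem (by omega))
    · rw [if_neg hia, if_neg hib]
      rw [Ne, hnd.getElem_inj_iff]
      omega
  have hons' : IsOpenNbrSeq G l' := by
    refine ⟨hnd', ?_⟩
    intro a
    have ha : (a : ℕ) < l.length := by have := a.isLt; omega
    by_cases hai : i = (a : ℕ)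
    · refine ⟨u, ?_, ?_⟩
      · rw [List.get_eq_getElem, hget a a.isLt, if_pos hai]
        exact hu1
      · intro j hj
        have hjl : (j : ℕ) < l.length := by omega
        rw [List.get_eq_getElem, hget j j.isLt, if_neg (by omega)]
        exact hu3 ⟨j, hjl⟩ (by show (j : ℕ) < i; omega)
    · obtain ⟨w, hw1, hw2⟩ := hwit ⟨a, ha⟩
      refine ⟨w, ?_, ?_⟩
      · rw [List.get_eq_getElem, hget a a.isLt, if_neg hai]
        exact hw1
      · intro j hj
        have hjl : (j : ℕ) < l.length := by omega
        rw [List.get_eq_getElem, hget j j.isLt]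
        by_cases hji : i = (j : ℕ)
        · rw [if_pos hji]
          intro hxw
          obtain ⟨j', hj'1, hj'2⟩ := hQi w hxw
          exact hw2 j' (by show (j' : ℕ) < (a : ℕ); omega) hj'2
        · rw [if_neg hji]
          exact hw2 ⟨j, hjl⟩ (by show (j : ℕ) < (a : ℕ); omega)
  have hxl' : x ∈ l' := by
    have h1 : l'[i]'(by omega) = x := by rw [hget i (by omega), if_pos rfl]
    exact h1 ▸ List.getElem_mem (by omega)
  exact ⟨l', ⟨hons', fun l'' h => (hmax l'' h).trans_eq hlen'.symm⟩, hxl'⟩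
end

section
/- A finite simple graph G has exactly one Grundy total dominating set if and only if γ_gr^t(G) = n(G) − i(G), where n(G) is the number of vertices of G and i(G) is the number of isolated vertices of G. -/
section Aux

variable {V : Type*} (G : SimpleGraph V)

lemma nil_ons : IsOpenNbrSeq G ([] : List V) :=
  ⟨List.nodup_nil, fun i => i.elim0⟩

variable [Fintype V]

lemma ons_bdd : BddAbove {k : ℕ | ∃ l : List V, IsOpenNbrSeq G l ∧ l.length = k} := by
  refine ⟨Fintype.card V, ?_⟩
  rintro k ⟨l, hl, rfl⟩
  exact hl.1.length_le_card

lemma exists_grundy : ∃ l : List V, IsGrundyTotalDomSeq G l := by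
  have hne : (0 : ℕ) ∈ {k : ℕ | ∃ l : List V, IsOpenNbrSeq G l ∧ l.length = k} :=
    ⟨[], nil_ons G, rfl⟩
  have hmem := Nat.sSup_mem ⟨0, hne⟩ (ons_bdd G)
  obtain ⟨l, hl, hlen⟩ := hmem
  refine ⟨l, hl, fun l' hl' => ?_⟩
  rw [hlen]
  exact le_csSup (ons_bdd G) ⟨l', hl', rfl⟩

lemma grundy_length {l : List V} (hl : IsGrundyTotalDomSeq G l) :
    grundyTotalNum G = l.length := by
  apply le_antisymm
  · refine csSup_le ⟨0, ⟨[], nil_ons G, rfl⟩⟩ ?_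
    rintro k ⟨m, hm, rfl⟩
    exact hl.2 m hm
  · exact le_csSup (ons_bdd G) ⟨l, hl.1, rfl⟩

end Aux

/-- Key lemma: given a Grundy sequence `l` and a non-isolated vertex `u ∉ l`,
there is a Grundy sequence containing `u`. -/
lemma grundy_insert {V : Type*} {G : SimpleGraph V} {l : List V}
    (hl : IsGrundyTotalDomSeq G l) {u : V} (hu : ∃ w, G.Adj u w) (hul : u ∉ l) :
    ∃ l', IsGrundyTotalDomSeq G l' ∧ u ∈ l' := by
  classical
  set C : ℕ → Prop := fun p => ∀ w, G.Adj u w →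
    ∃ j : Fin l.length, (j : ℕ) < p ∧ G.Adj (l.get j) w with hC
  have hCk : C l.length := by
    by_contra h
    simp only [hC, not_forall] at h
    obtain ⟨w, hw, hwn⟩ := h
    push_neg at hwn
    -- l ++ [u] is an open neighborhood sequence, contradicting maximality
    have hons : IsOpenNbrSeq G (l ++ [u]) := by
      constructor
      · simp [List.nodup_append, hl.1.1, hul]
        intro a ha hau; exact hul (hau ▸ ha)
      · intro i
        have hlen : (l ++ [u]).length = l.length + 1 := by simp
        by_cases hi : (i : ℕ) < l.length
        · obtain ⟨w', hw', hw'n⟩ := hl.1.2 ⟨i, hi⟩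
          refine ⟨w', ?_, ?_⟩
          · have : (l ++ [u]).get i = l.get ⟨i, hi⟩ := by
              simp [List.getElem_append_left hi]
            rw [this]; exact hw'
          · intro j hj
            have hjl : (j : ℕ) < l.length := by omega
            have : (l ++ [u]).get j = l.get ⟨j, hjl⟩ := by
              simp [List.getElem_append_left hjl]
            rw [this]
            exact hw'n ⟨j, hjl⟩ hj
        · have hieq : (i : ℕ) = l.length := by
            have h2 : (i : ℕ) < (l ++ [u]).length := i.2
            simp only [List.length_append, List.length_singleton] at h2; omega
          refine ⟨w, ?_, ?_⟩
          · have : (l ++ [u]).get i = u := by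
              rw [List.get_eq_getElem, List.getElem_append_right (le_of_eq hieq.symm)]
              simp [hieq]
            rw [this]; exact hw
          · intro j hj
            have hjl : (j : ℕ) < l.length := by omega
            have : (l ++ [u]).get j = l.get ⟨j, hjl⟩ := by
              simp [List.getElem_append_left hjl]
            rw [this]
            exact hwn ⟨j, hjl⟩ (hjl)
    have := hl.2 _ hons
    simp at this
  have hC0 : ¬ C 0 := by
    obtain ⟨w, hw⟩ := hu
    intro h
    obtain ⟨j, hj, _⟩ := h w hw
    omega
  -- minimal p with C p
  have hex : ∃ p, C p := ⟨l.length, hCk⟩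
  set p := Nat.find hex with hp
  have hCp : C p := Nat.find_spec hex
  have hppos : 0 < p := by
    rcases Nat.eq_zero_or_pos p with h | h
    · exact absurd (h ▸ hCp) hC0
    · exact h
  obtain ⟨q, hq⟩ : ∃ q, p = q + 1 := ⟨p - 1, by omega⟩
  have hnCq : ¬ C q := Nat.find_min hex (by omega)
  have hple : p ≤ l.length := Nat.find_le hCk
  have hqlt : q < l.length := by omega
  simp only [hC, not_forall] at hnCq
  obtain ⟨w0, hw0, hw0n⟩ := hnCq
  push_neg at hw0n
  -- the new list
  set l' := l.set q u with hl'
  have hlen' : l'.length = l.length := by simp [hl']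
  have hget : ∀ (i : ℕ) (h : i < l.length), l'.get ⟨i, hlen' ▸ h⟩ =
      if q = i then u else l.get ⟨i, h⟩ := by
    intro i h
    simp [hl', List.getElem_set]
  have humem : u ∈ l' := by
    have := hget q hqlt
    rw [if_pos rfl] at this
    exact this ▸ List.get_mem _ _
  have hons' : IsOpenNbrSeq G l' := by
    constructor
    · rw [List.nodup_iff_injective_get]
      intro a b hab
      have ha := hget a (hlen' ▸ a.2)
      have hb := hget b (hlen' ▸ b.2)
      have ha' : l'.get a = if q = (a : ℕ) then u else l.get ⟨a, hlen' ▸ a.2⟩ := by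
        convert ha using 2
      have hb' : l'.get b = if q = (b : ℕ) then u else l.get ⟨b, hlen' ▸ b.2⟩ := by
        convert hb using 2
      rw [ha', hb'] at hab
      by_cases h1 : q = (a : ℕ) <;> by_cases h2 : q = (b : ℕ)
      · exact Fin.ext (by omega)
      · rw [if_pos h1, if_neg h2] at hab
        exact absurd (hab ▸ List.get_mem l _) hul
      · rw [if_neg h1, if_pos h2] at hab
        exact absurd (hab ▸ List.get_mem l _) hul
      · rw [if_neg h1, if_neg h2] at hab
        have := List.nodup_iff_injective_get.mp hl.1.1 hab
        simp only [Fin.mk.injEq] at this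
        exact Fin.ext this
    · intro i
      have hi : (i : ℕ) < l.length := hlen' ▸ i.2
      have hgeti : l'.get i = if q = (i : ℕ) then u else l.get ⟨i, hi⟩ := by
        have := hget i hi
        convert this using 2
      rcases lt_trichotomy (i : ℕ) q with hlt | heq | hgt
      · -- i < q : original witness
        obtain ⟨w', hw', hw'n⟩ := hl.1.2 ⟨i, hi⟩
        refine ⟨w', ?_, ?_⟩
        · rw [hgeti, if_neg (by omega)]; exact hw'
        · intro j hj
          have hjlen : (j : ℕ) < l.length := hlen' ▸ j.2
          have hjq : (j : ℕ) < q := by omega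
          have : l'.get j = l.get ⟨j, hjlen⟩ := by
            have := hget j hjlen
            rw [if_neg (by omega)] at this
            convert this using 2
          rw [this]
          exact hw'n ⟨j, hjlen⟩ hj
      · -- i = q : vertex u with witness w0
        refine ⟨w0, ?_, ?_⟩
        · rw [hgeti, if_pos heq.symm]; exact hw0
        · intro j hj
          have hjlen : (j : ℕ) < l.length := hlen' ▸ j.2
          have : l'.get j = l.get ⟨j, hjlen⟩ := by
            have := hget j hjlen
            rw [if_neg (by omega)] at this
            convert this using 2
          rw [this]
          exact hw0n ⟨j, hjlen⟩ (show (j : ℕ) < q by omega)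
      · -- i > q : original witness works; u covers nothing new for it
        obtain ⟨w', hw', hw'n⟩ := hl.1.2 ⟨i, hi⟩
        refine ⟨w', ?_, ?_⟩
        · rw [hgeti, if_neg (by omega)]; exact hw'
        · intro j hj
          have hjlen : (j : ℕ) < l.length := hlen' ▸ j.2
          by_cases hjq : q = (j : ℕ)
          · have : l'.get j = u := by
              have := hget j hjlen
              rw [if_pos hjq] at this
              convert this using 2
            rw [this]
            intro hadj
            obtain ⟨j', hj', hadj'⟩ := hCp w' hadj
            have : (j' : ℕ) < (i : ℕ) := by omega
            exact hw'n j' this hadj'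
          · have : l'.get j = l.get ⟨j, hjlen⟩ := by
              have := hget j hjlen
              rw [if_neg hjq] at this
              convert this using 2
            rw [this]
            exact hw'n ⟨j, hjlen⟩ hj
  refine ⟨l', ⟨hons', fun m hm => ?_⟩, humem⟩
  rw [hlen']
  exact hl.2 m hm

lemma ons_mem_nonisolated {V : Type*} {G : SimpleGraph V} {l : List V}
    (hl : IsOpenNbrSeq G l) {v : V} (hv : v ∈ l) : ∃ w, G.Adj v w := by
  obtain ⟨i, hi⟩ := List.get_of_mem hv
  obtain ⟨w, hw, _⟩ := hl.2 i
  exact ⟨w, hi ▸ hw⟩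


/-- A finite graph `G` has exactly one Grundy total dominating set iff its Grundy total
domination number equals the number of vertices minus the number of isolated
vertices. -/
theorem unique_grundyTotalDomSet_iff {V : Type*} [Fintype V] (G : SimpleGraph V) :
    (∃! A : Set V, IsGrundyTotalDomSet G A) ↔
      grundyTotalNum G = Fintype.card V - ({v : V | ∀ w : V, ¬ G.Adj v w} : Set V).ncard := by
  classical
  set I : Set V := {v : V | ∀ w : V, ¬ G.Adj v w} with hI
  have hIcard : I.ncard + Iᶜ.ncard = Fintype.card V := by
    rw [Set.ncard_add_ncard_compl]
    exact Nat.card_eq_fintype_card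
  have hsub : Fintype.card V - I.ncard = Iᶜ.ncard := by omega
  obtain ⟨l0, hl0⟩ := exists_grundy G
  have hsubI : ∀ {m : List V}, IsOpenNbrSeq G m → {v : V | v ∈ m} ⊆ Iᶜ := by
    intro m hm v hv
    obtain ⟨w, hw⟩ := ons_mem_nonisolated hm hv
    intro hiso
    exact hiso w hw
  have hncard_list : ∀ {m : List V}, m.Nodup → ({v : V | v ∈ m} : Set V).ncard = m.length := by
    intro m hm
    have : ({v : V | v ∈ m} : Set V) = ↑m.toFinset := by
      ext v; simp
    rw [this, Set.ncard_coe_finset, List.toFinset_card_of_nodup hm]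
  constructor
  · rintro ⟨A, hA, hAu⟩
    have hsetl0 : IsGrundyTotalDomSet G {v : V | v ∈ l0} := ⟨l0, hl0, rfl⟩
    have hA0 : {v : V | v ∈ l0} = A := hAu _ hsetl0
    -- every non-isolated vertex is in l0's set
    have hIc : Iᶜ ⊆ {v : V | v ∈ l0} := by
      intro u hu
      have hune : ∃ w, G.Adj u w := by
        by_contra h
        push_neg at h
        exact hu h
      by_cases hul : u ∈ l0
      · exact hul
      · obtain ⟨l', hl', hul'⟩ := grundy_insert hl0 hune hul
        have : {v : V | v ∈ l'} = A := hAu _ ⟨l', hl', rfl⟩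
        rw [hA0, ← this]
        exact hul'
    have heq : {v : V | v ∈ l0} = Iᶜ :=
      le_antisymm (hsubI hl0.1) hIc
    rw [grundy_length G hl0, hsub, ← hncard_list hl0.1.1, heq]
  · intro h
    have hlen0 : l0.length = Iᶜ.ncard := by
      rw [← grundy_length G hl0, h, hsub]
    have hkey : ∀ {m : List V}, IsGrundyTotalDomSeq G m → {v : V | v ∈ m} = Iᶜ := by
      intro m hm
      have hmlen : m.length = Iᶜ.ncard := by
        have h1 := hm.2 l0 hl0.1
        have h2 := hl0.2 m hm.1
        omega
      apply Set.eq_of_subset_of_ncard_le (hsubI hm.1)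
      rw [hncard_list hm.1.1, hmlen]
    refine ⟨Iᶜ, ⟨l0, hl0, hkey hl0⟩, ?_⟩
    rintro B ⟨m, hm, rfl⟩
    exact hkey hm
end

section
/- If T is a finite forest with no isolated vertices and no open twins, then T is an iso-unique Grundy total domination graph if and only if γ_gr^t(T) = n(T), where n(T) is the number of vertices of T. -/
section Aux

open SimpleGraph

variable {V : Type*}

/-- A walk following the vertices `seq i, seq (i+1), ..., seq (i+k)`. -/
def seqWalk (F : SimpleGraph V) (seq : ℕ → V) (h : ∀ n, F.Adj (seq n) (seq (n+1))) (i : ℕ) :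
    ∀ k : ℕ, F.Walk (seq i) (seq (i + k))
  | 0 => Walk.nil
  | (k+1) => (seqWalk F seq h i k).concat (h (i + k))

lemma seqWalk_support (F : SimpleGraph V) (seq : ℕ → V) (h : ∀ n, F.Adj (seq n) (seq (n+1)))
    (i : ℕ) (k : ℕ) :
    (seqWalk F seq h i k).support = (List.range (k+1)).map (fun t => seq (i + t)) := by
  induction k with
  | zero => simp [seqWalk, List.range_succ]
  | succ k ih =>
      simp only [seqWalk, Walk.support_concat, ih, List.concat_eq_append]
      simp [List.range_succ, Nat.add_assoc]

lemma seqWalk_edges (F : SimpleGraph V) (seq : ℕ → V) (h : ∀ n, F.Adj (seq n) (seq (n+1)))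
    (i : ℕ) (k : ℕ) :
    (seqWalk F seq h i k).edges = (List.range k).map (fun t => s(seq (i + t), seq (i + t + 1))) := by
  induction k with
  | zero => simp [seqWalk]
  | succ k ih =>
      rw [seqWalk, Walk.edges_concat, ih, List.concat_eq_append, List.range_succ, List.map_append]
      simp [Nat.add_assoc]

/-- In a finite acyclic graph there is no infinite non-backtracking walk. -/
lemma no_nonbacktracking_walk [Finite V] {F : SimpleGraph V} (hF : F.IsAcyclic)
    (seq : ℕ → V) (hadj : ∀ n, F.Adj (seq n) (seq (n+1)))
    (hnb : ∀ n, seq (n+2) ≠ seq n) : False := by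
  classical
  obtain ⟨x, y, hxy, hfxy⟩ := Finite.exists_ne_map_eq_of_infinite seq
  set D : Set ℕ := {d | 0 < d ∧ ∃ i, seq (i + d) = seq i} with hD
  have hDne : D.Nonempty := by
    rcases lt_or_gt_of_ne hxy with h | h
    · exact ⟨y - x, by omega, x, by rw [show x + (y-x) = y by omega]; exact hfxy.symm⟩
    · exact ⟨x - y, by omega, y, by rw [show y + (x-y) = x by omega]; exact hfxy⟩
  obtain ⟨d, hdD, hmin⟩ : ∃ d, d ∈ D ∧ ∀ e ∈ D, d ≤ e :=
    ⟨sInf D, Nat.sInf_mem hDne, fun e he => Nat.sInf_le he⟩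
  obtain ⟨hdpos, i, hi⟩ := hdD
  have hinj : ∀ a b : ℕ, a < b → b - a < d → seq a ≠ seq b := by
    intro a b hab hbd he
    have : (b - a) ∈ D := ⟨by omega, a, by rw [show a + (b-a) = b by omega]; exact he.symm⟩
    have := hmin _ this
    omega
  have hd1 : d ≠ 1 := by
    intro h
    have := hadj i
    rw [h] at hi
    rw [hi] at this
    exact F.irrefl this
  have hd2 : d ≠ 2 := by
    intro h
    exact hnb i (by rw [← h]; exact hi)
  have hd3 : 3 ≤ d := by omega
  -- key injectivity on the window [i, i+d]
  have hwin : ∀ a b : ℕ, a ≤ d → b ≤ d → seq (i+a) = seq (i+b) → a = b ∨ (a = 0 ∧ b = d) ∨ (a = d ∧ b = 0) := by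
    intro a b ha hb he
    rcases lt_trichotomy a b with h | h | h
    · rcases Nat.lt_or_ge b d with h' | h'
      · exact absurd he (hinj (i+a) (i+b) (by omega) (by omega))
      · have hbd : b = d := by omega
        subst hbd
        rw [hi] at he
        rcases Nat.eq_zero_or_pos a with h0 | h0
        · right; left; exact ⟨h0, rfl⟩
        · exact absurd he.symm (hinj i (i+a) (by omega) (by omega))
    · left; exact h
    · rcases Nat.lt_or_ge a d with h' | h'
      · exact absurd he.symm (hinj (i+b) (i+a) (by omega) (by omega))
      · have had : a = d := by omega
        subst had
        rw [hi] at he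
        rcases Nat.eq_zero_or_pos b with h0 | h0
        · right; right; exact ⟨rfl, h0⟩
        · exact absurd he (hinj i (i+b) (by omega) (by omega))
  have hcast : seq (i + d) = seq i := hi
  let w : F.Walk (seq i) (seq i) := (seqWalk F seq hadj i d).copy rfl hcast
  have hsup : w.support = (List.range (d+1)).map (fun t => seq (i + t)) := by
    simp [w, seqWalk_support]
  have hedg : w.edges = (List.range d).map (fun t => s(seq (i + t), seq (i + t + 1))) := by
    simp [w, seqWalk_edges]
  have hcyc : w.IsCycle := by
    constructor
    · constructor
      · rw [Walk.isTrail_def, hedg]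
        rw [List.nodup_map_iff_inj_on (List.nodup_range (n := d))]
        intro a ha b hb hab'
        simp only [List.mem_range] at ha hb
        rw [Sym2.eq_iff] at hab'
        rcases hab' with ⟨h1, h2⟩ | ⟨h1, h2⟩
        · rcases hwin a b (by omega) (by omega) h1 with h | ⟨h, h'⟩ | ⟨h, h'⟩ <;> omega
        · -- seq (i+a) = seq (i+b+1), seq (i+a+1) = seq (i+b)
          have e1 : seq (i+a) = seq (i+(b+1)) := by rw [h1]; ring_nf
          have e2 : seq (i+(a+1)) = seq (i+b) := by rw [← h2]; ring_nf
          exfalso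
          by_cases hab : a = b + 1
          · exact hnb (i+b) (by rw [show i + b + 2 = i + (a+1) by omega]; exact e2)
          by_cases hba : b = a + 1
          · exact hnb (i+a) (by rw [show i + a + 2 = i + (b+1) by omega]; exact e1.symm)
          rcases hwin a (b+1) (by omega) (by omega) e1 with h | ⟨h, h'⟩ | ⟨h, h'⟩
          · exact hab h
          · rcases hwin (a+1) b (by omega) (by omega) e2 with g | ⟨g, g'⟩ | ⟨g, g'⟩ <;> omega
          · omega
      · intro hnil
        have : w.edges = [] := by rw [hnil]; rfl
        rw [hedg] at this
        have : d = 0 := by simpa using congrArg List.length this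
        omega
    · rw [hsup]
      have : (List.range (d+1)).map (fun t => seq (i + t)) =
          seq (i+0) :: (List.range d).map (fun t => seq (i + (t+1))) := by
        rw [List.range_succ_eq_map]
        simp [Function.comp]
      rw [this]
      simp only [List.tail_cons]
      rw [List.nodup_map_iff_inj_on (List.nodup_range (n := d))]
      intro a ha b hb hab'
      simp only [List.mem_range] at ha hb
      rcases hwin (a+1) (b+1) (by omega) (by omega) hab' with h | ⟨h, h'⟩ | ⟨h, h'⟩ <;> omega
  exact hF w hcyc


/-- Open neighborhood sequence with witnesses in `s`, avoiding blocked set `B`. -/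
def ONSW (F : SimpleGraph V) (s : Finset V) : List V → Set V → Prop
  | [], _ => True
  | v :: t, B => (∃ w ∈ s, F.Adj v w ∧ w ∉ B) ∧ ONSW F s t (B ∪ {x | F.Adj v x})

lemma ONSW_mono (F : SimpleGraph V) (s : Finset V) :
    ∀ (l : List V) (B₁ B₂ : Set V), (∀ w ∈ s, w ∈ B₂ → w ∈ B₁) →
      ONSW F s l B₁ → ONSW F s l B₂ := by
  intro l
  induction l with
  | nil => intro B₁ B₂ _ _; trivial
  | cons v t ih =>
      intro B₁ B₂ hmono h
      obtain ⟨⟨w, hws, hadj, hwB⟩, ht⟩ := h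
      refine ⟨⟨w, hws, hadj, fun hc => hwB (hmono w hws hc)⟩, ?_⟩
      exact ih _ _ (fun x hx hc => by
        rcases hc with hc | hc
        · exact Or.inl (hmono x hx hc)
        · exact Or.inr hc) ht

lemma ONSW_append (F : SimpleGraph V) (s : Finset V) :
    ∀ (l₁ l₂ : List V) (B : Set V), ONSW F s l₁ B →
      ONSW F s l₂ (B ∪ {x | ∃ v ∈ l₁, F.Adj v x}) → ONSW F s (l₁ ++ l₂) B := by
  intro l₁
  induction l₁ with
  | nil =>
      intro l₂ B _ h₂
      have hset : (B ∪ {x | ∃ v ∈ ([] : List V), F.Adj v x}) = B := by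
        ext x; simp
      rw [hset] at h₂
      simpa using h₂
  | cons v t ih =>
      intro l₂ B h₁ h₂
      obtain ⟨hhead, ht⟩ := h₁
      refine ⟨hhead, ?_⟩
      apply ih
      · exact ht
      · have hset : ((B ∪ {x | F.Adj v x}) ∪ {x | ∃ u ∈ t, F.Adj u x}) =
            (B ∪ {x | ∃ u ∈ (v :: t : List V), F.Adj u x}) := by
          ext x
          simp only [Set.mem_union, Set.mem_setOf_eq, List.mem_cons]
          constructor
          · rintro ((h | h) | ⟨u, hu, h⟩)
            · exact Or.inl h
            · exact Or.inr ⟨v, Or.inl rfl, h⟩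
            · exact Or.inr ⟨u, Or.inr hu, h⟩
          · rintro (h | ⟨u, (rfl | hu), h⟩)
            · exact Or.inl (Or.inl h)
            · exact Or.inl (Or.inr h)
            · exact Or.inr ⟨u, hu, h⟩
        rw [hset]
        exact h₂

lemma ONSW_get (F : SimpleGraph V) (s : Finset V) :
    ∀ (l : List V) (B : Set V), ONSW F s l B →
      ∀ i : Fin l.length, ∃ w : V, F.Adj (l.get i) w ∧ w ∉ B ∧
        ∀ j : Fin l.length, (j : ℕ) < (i : ℕ) → ¬ F.Adj (l.get j) w := by
  intro l
  induction l with
  | nil => intro B _ i; exact absurd i.isLt (by simp)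
  | cons v t ih =>
      intro B h i
      obtain ⟨⟨w₀, _, hadj₀, hw₀B⟩, ht⟩ := h
      obtain ⟨iv, hiv⟩ := i
      cases iv with
      | zero =>
          exact ⟨w₀, hadj₀, hw₀B, fun j hj => absurd hj (by simp)⟩
      | succ i' =>
          have hi' : i' < t.length := by simpa using hiv
          obtain ⟨w, hadj, hwB, hjs⟩ := ih _ ht ⟨i', hi'⟩
          refine ⟨w, by simpa using hadj, fun hc => hwB (Or.inl hc), ?_⟩
          intro j hj
          obtain ⟨jv, hjv⟩ := j
          cases jv with
          | zero =>
              simp only [List.get]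
              intro hc
              exact hwB (Or.inr hc)
          | succ j' =>
              have hj' : j' < t.length := by simpa using hjv
              have := hjs ⟨j', hj'⟩ (by simpa using hj)
              simpa using this

lemma isOpenNbrSeq_of_ONSW (F : SimpleGraph V) (s : Finset V) (l : List V)
    (hnd : l.Nodup) (h : ONSW F s l (∅ : Set V)) : IsOpenNbrSeq F l := by
  refine ⟨hnd, fun i => ?_⟩
  obtain ⟨w, hadj, _, hjs⟩ := ONSW_get F s l ∅ h i
  exact ⟨w, hadj, hjs⟩


/-- A matching, given by its vertex set together with a pairing involution. -/
def Mtch (F : SimpleGraph V) (s : Finset V) (f : V → V) : Prop :=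
  ∀ v ∈ s, F.Adj v (f v) ∧ f v ∈ s ∧ f (f v) = v

lemma mtch_empty (F : SimpleGraph V) : Mtch F ∅ id := by
  intro v hv; simp at hv

lemma matching_of_inj_system [Fintype V] {F : SimpleGraph V} (hF : F.IsAcyclic) :
    ∀ (n : ℕ) (S : Finset V) (σ : V → V), S.card ≤ n → (∀ v ∈ S, F.Adj v (σ v)) →
      Set.InjOn σ ↑S → ∃ s f, Mtch F s f ∧ (↑s : Set V) ⊆ (↑S ∪ σ '' ↑S) ∧ S.card ≤ s.card := by
  classical
  intro n
  induction n with
  | zero =>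
      intro S σ hcard _ _
      exact ⟨∅, id, mtch_empty F, by simp, by omega⟩
  | succ n ih =>
      intro S σ hcard hadj hinj
      rcases S.eq_empty_or_nonempty with rfl | ⟨v₀, hv₀⟩
      · exact ⟨∅, id, mtch_empty F, by simp, by simp⟩
      -- find a peelable vertex v
      have hkey : ∃ v ∈ S, ∀ x ∈ S, σ x = v → x = σ v := by
        by_cases hsub : ∀ v ∈ S, ∃ x ∈ S, σ x = v
        · -- σ maps S onto S
          have hSsub : S ⊆ S.image σ := by
            intro v hv
            obtain ⟨x, hx, hxe⟩ := hsub v hv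
            exact Finset.mem_image.mpr ⟨x, hx, hxe⟩
          have himgeq : S.image σ = S := by
            apply (Finset.eq_of_subset_of_card_le hSsub ?_).symm
            rw [Finset.card_image_of_injOn hinj]
          have himg : ∀ v ∈ S, σ v ∈ S := by
            intro v hv
            rw [← himgeq]
            exact Finset.mem_image.mpr ⟨v, hv, rfl⟩
          have hinv : ∃ v ∈ S, σ (σ v) = v := by
            by_contra hc
            push_neg at hc
            set seq : ℕ → V := fun k => σ^[k] v₀ with hseq
            have hmem : ∀ k, seq k ∈ S := by
              intro k
              induction k with
              | zero => exact hv₀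
              | succ k ihk =>
                  rw [hseq]
                  simp only [Function.iterate_succ_apply']
                  exact himg _ ihk
            have hstep : ∀ k, seq (k+1) = σ (seq k) := by
              intro k
              simp [hseq, Function.iterate_succ_apply']
            exact no_nonbacktracking_walk hF seq
              (fun k => by rw [hstep]; exact hadj _ (hmem k))
              (fun k => by
                rw [hstep, hstep]
                exact hc _ (hmem k))
          obtain ⟨v, hv, hvv⟩ := hinv
          refine ⟨v, hv, fun x hx hxe => ?_⟩
          exact hinj hx (himg _ hv) (by rw [hxe, hvv])
        · push_neg at hsub
          obtain ⟨v, hv, hvx⟩ := hsub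
          exact ⟨v, hv, fun x hx hxe => absurd hxe (hvx x hx)⟩
      obtain ⟨v, hvS, hv2⟩ := hkey
      have hvne : v ≠ σ v := (F.ne_of_adj (hadj v hvS))
      set S' : Finset V := (S.erase v).erase (σ v) with hS'
      have hS'sub : S' ⊆ S := (Finset.erase_subset _ _).trans (Finset.erase_subset _ _)
      have hvS' : v ∉ S' := by simp [hS']
      have hsvS' : σ v ∉ S' := by simp [hS']
      have hcard2 : S.card ≤ S'.card + 2 := by
        have h1 : (S.erase v).card = S.card - 1 := Finset.card_erase_of_mem hvS
        have h2 : (S.erase v).card - 1 ≤ S'.card := Finset.pred_card_le_card_erase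
        have h3 : 1 ≤ S.card := Finset.card_pos.mpr ⟨v, hvS⟩
        omega
      have hcard1 : S'.card ≤ n := by
        have h1 : (S.erase v).card = S.card - 1 := Finset.card_erase_of_mem hvS
        have h2 : S'.card ≤ (S.erase v).card := Finset.card_erase_le
        have h3 : 1 ≤ S.card := Finset.card_pos.mpr ⟨v, hvS⟩
        omega
      obtain ⟨s', f', hm', hsub', hc'⟩ := ih S' σ hcard1
        (fun x hx => hadj x (hS'sub hx)) (hinj.mono (by exact_mod_cast hS'sub))
      have hvnots' : v ∉ s' := by
        intro h
        rcases hsub' h with hx | ⟨x, hx, hxe⟩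
        · exact hvS' (by exact_mod_cast hx)
        · have hxS' : x ∈ S' := by exact_mod_cast hx
          have := hv2 x (hS'sub hxS') hxe
          rw [this] at hxS'
          exact hsvS' hxS'
      have hsvnots' : σ v ∉ s' := by
        intro h
        rcases hsub' h with hx | ⟨x, hx, hxe⟩
        · exact hsvS' (by exact_mod_cast hx)
        · have hxS' : x ∈ S' := by exact_mod_cast hx
          have := hinj (Finset.mem_coe.mpr (hS'sub hxS')) (Finset.mem_coe.mpr hvS) hxe
          rw [this] at hxS'
          exact hvS' hxS'
      refine ⟨insert v (insert (σ v) s'),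
        fun x => if x = v then σ v else if x = σ v then v else f' x, ?_, ?_, ?_⟩
      · intro x hx
        dsimp only
        rcases Finset.mem_insert.mp hx with rfl | hx
        · refine ⟨by simpa using hadj x hvS, by simp, by simp [Ne.symm hvne]⟩
        rcases Finset.mem_insert.mp hx with rfl | hx
        · exact ⟨by simpa [Ne.symm hvne] using (hadj v hvS).symm,
            by simp [Ne.symm hvne], by simp [Ne.symm hvne]⟩
        · have hxv : x ≠ v := fun h => hvnots' (h ▸ hx)
          have hxsv : x ≠ σ v := fun h => hsvnots' (h ▸ hx)
          obtain ⟨ha, hb, hc⟩ := hm' x hx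
          have hfv : f' x ≠ v := fun h => hvnots' (h ▸ hb)
          have hfsv : f' x ≠ σ v := fun h => hsvnots' (h ▸ hb)
          refine ⟨?_, ?_, ?_⟩
          · simp only [if_neg hxv, if_neg hxsv]; exact ha
          · simp only [if_neg hxv, if_neg hxsv]
            exact Finset.mem_insert_of_mem (Finset.mem_insert_of_mem hb)
          · simp only [if_neg hxv, if_neg hxsv, if_neg hfv, if_neg hfsv]; exact hc
      · intro x hx
        simp only [Finset.coe_insert, Set.mem_insert_iff, Finset.mem_coe] at hx
        rcases hx with rfl | rfl | hx
        · exact Or.inl (Finset.mem_coe.mpr hvS)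
        · exact Or.inr ⟨v, Finset.mem_coe.mpr hvS, rfl⟩
        · rcases hsub' (Finset.mem_coe.mpr hx) with h | ⟨y, hy, hye⟩
          · exact Or.inl (Finset.coe_subset.mpr hS'sub h)
          · exact Or.inr ⟨y, (Finset.coe_subset.mpr hS'sub) hy, hye⟩
      · have e1 : (insert v (insert (σ v) s')).card = (insert (σ v) s').card + 1 := by
          apply Finset.card_insert_of_notMem
          simp only [Finset.mem_insert]
          rintro (h | h)
          · exact hvne h
          · exact hvnots' h
        have e2 : (insert (σ v) s').card = s'.card + 1 :=
          Finset.card_insert_of_notMem hsvnots'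
        omega


/-- Every nonempty matching in a forest has a vertex whose only matched neighbor
is its partner. -/
lemma exists_matched_leaf [Fintype V] {F : SimpleGraph V} (hF : F.IsAcyclic)
    {s : Finset V} {f : V → V} (hm : Mtch F s f) (hne : s.Nonempty) :
    ∃ u ∈ s, ∀ x ∈ s, F.Adj u x → x = f u := by
  classical
  by_contra hc
  push_neg at hc
  -- every matched vertex has a matched neighbor other than its partner
  have hstep : ∀ u : V, ∃ x : V, u ∈ s → (x ∈ s ∧ F.Adj u x ∧ x ≠ f u) := by
    intro u
    by_cases h : u ∈ s
    · obtain ⟨x, hx1, hx2, hx3⟩ := hc u h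
      exact ⟨x, fun _ => ⟨hx1, hx2, hx3⟩⟩
    · exact ⟨u, fun h' => absurd h' h⟩
  choose g hg using hstep
  obtain ⟨v₀, hv₀⟩ := hne
  -- pairs (previous, current)
  let nxt : V × V → V × V := fun p => (p.2, if f p.2 = p.1 then g p.2 else f p.2)
  let p : ℕ → V × V := fun n => nxt^[n] (v₀, f v₀)
  have hp1 : ∀ n, p (n+1) = nxt (p n) := by
    intro n
    simp only [p, Function.iterate_succ_apply']
  have hinv : ∀ n, (p n).1 ∈ s ∧ (p n).2 ∈ s ∧ F.Adj (p n).1 (p n).2 := by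
    intro n
    induction n with
    | zero => exact ⟨hv₀, (hm v₀ hv₀).2.1, (hm v₀ hv₀).1⟩
    | succ n ihn =>
        obtain ⟨h1, h2, h3⟩ := ihn
        rw [hp1]
        by_cases h : f (p n).2 = (p n).1
        · refine ⟨h2, ?_, ?_⟩
          · simp only [nxt, if_pos h]
            exact (hg (p n).2 h2).1
          · simp only [nxt, if_pos h]
            exact (hg (p n).2 h2).2.1
        · refine ⟨h2, ?_, ?_⟩
          · simp only [nxt, if_neg h]
            exact (hm _ h2).2.1
          · simp only [nxt, if_neg h]
            exact (hm _ h2).1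
  -- the walk
  have hnb : ∀ n, (p (n+1)).2 ≠ (p n).1 := by
    intro n
    rw [hp1]
    obtain ⟨h1, h2, _⟩ := hinv n
    by_cases h : f (p n).2 = (p n).1
    · simp only [nxt, if_pos h]
      rw [← h]
      exact (hg (p n).2 h2).2.2
    · simpa only [nxt, if_neg h] using h
  refine no_nonbacktracking_walk hF (fun n => (p n).1) (fun n => ?_) (fun n => ?_)
  · show F.Adj (p n).1 (p (n+1)).1
    rw [hp1]
    exact (hinv n).2.2
  · show (p (n+2)).1 ≠ (p n).1
    rw [hp1 (n+1)]
    exact hnb n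


lemma ONSW_mono_s (F : SimpleGraph V) :
    ∀ (l : List V) (s t : Finset V) (B : Set V), s ⊆ t →
      ONSW F s l B → ONSW F t l B := by
  intro l
  induction l with
  | nil => intro s t B _ _; trivial
  | cons v r ih =>
      rintro s t B hst ⟨⟨w, hws, h1, h2⟩, hr⟩
      exact ⟨⟨w, hst hws, h1, h2⟩, ih s t _ hst hr⟩

/-- From a matching in a forest, construct an open neighborhood sequence whose
vertex set is exactly the matched set. -/
lemma mtch_seq [Fintype V] [DecidableEq V] {F : SimpleGraph V} (hF : F.IsAcyclic) :
    ∀ (n : ℕ) (s : Finset V) (f : V → V), s.card ≤ n → Mtch F s f →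
      ∃ l : List V, l.Nodup ∧ l.toFinset = s ∧ ONSW F s l ∅ := by
  classical
  intro n
  induction n with
  | zero =>
      intro s f hcard _
      have : s = ∅ := Finset.card_eq_zero.mp (by omega)
      exact ⟨[], by simp, by simp [this], trivial⟩
  | succ n ih =>
      intro s f hcard hm
      rcases s.eq_empty_or_nonempty with rfl | hne
      · exact ⟨[], by simp, by simp, trivial⟩
      obtain ⟨u, hu, hleaf⟩ := exists_matched_leaf hF hm hne
      obtain ⟨hadjuw, hws, hfw⟩ := hm u hu
      set w := f u with hw
      have huw : u ≠ w := F.ne_of_adj hadjuw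
      set s' : Finset V := (s.erase u).erase w with hs'
      have hsub' : s' ⊆ s := (Finset.erase_subset _ _).trans (Finset.erase_subset _ _)
      have hus' : u ∉ s' := by simp [hs']
      have hws' : w ∉ s' := by simp [hs']
      have hmem' : ∀ x, x ∈ s' ↔ (x ≠ u ∧ x ≠ w ∧ x ∈ s) := by
        intro x
        simp only [hs', Finset.mem_erase]
        tauto
      have hm' : Mtch F s' f := by
        intro x hx
        have hxs : x ∈ s := hsub' hx
        obtain ⟨a1, a2, a3⟩ := hm x hxs
        obtain ⟨hxu, hxw, _⟩ := (hmem' x).mp hx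
        refine ⟨a1, ?_, a3⟩
        rw [hmem']
        refine ⟨?_, ?_, a2⟩
        · intro h
          exact hxw (by rw [← a3, h, ← hw])
        · intro h
          apply hxu
          rw [← a3, h]
          exact hfw
      have hcard' : s'.card ≤ n := by
        have h1 : (s.erase u).card = s.card - 1 := Finset.card_erase_of_mem hu
        have h2 : s'.card = (s.erase u).card - 1 :=
          Finset.card_erase_of_mem (Finset.mem_erase.mpr ⟨Ne.symm huw, hws⟩)
        have h3 : 1 ≤ s.card := Finset.card_pos.mpr hne
        omega
      obtain ⟨l', hnd', htf', hon'⟩ := ih s' f hcard' hm'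
      have hl'mem : ∀ x ∈ l', x ∈ s' := fun x hx => htf' ▸ List.mem_toFinset.mpr hx
      refine ⟨u :: (l' ++ [w]), ?_, ?_, ?_⟩
      · rw [List.nodup_cons]
        constructor
        · intro h
          rcases List.mem_append.mp h with h | h
          · exact hus' (hl'mem u h)
          · exact huw (by simpa using h)
        · rw [List.nodup_append]
          refine ⟨hnd', by simp, ?_⟩
          intro x hx
          simp only [List.mem_singleton]
          intro b hb h
          rw [hb] at h
          exact hws' (h ▸ hl'mem x hx)
      · ext x
        simp only [List.toFinset_cons, List.toFinset_append, Finset.mem_insert,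
          Finset.mem_union, List.mem_toFinset, List.toFinset_cons, List.toFinset_nil]
        rw [show x ∈ l' ↔ x ∈ s' from ⟨fun h => hl'mem x h, fun h => by
          rw [← htf'] at h; exact List.mem_toFinset.mp h⟩, hmem']
        simp only [insert_empty_eq, Finset.mem_insert, Finset.notMem_empty, or_false]
        constructor
        · rintro (rfl | ⟨_, _, h⟩ | rfl)
          · exact hu
          · exact h
          · exact hws
        · intro hx
          by_cases h1 : x = u
          · exact Or.inl h1
          by_cases h2 : x = w
          · exact Or.inr (Or.inr h2)
          · exact Or.inr (Or.inl ⟨h1, h2, hx⟩)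
      · refine ⟨⟨w, hws, hadjuw, by simp⟩, ?_⟩
        apply ONSW_append
        · -- l' avoiding N(u)
          apply ONSW_mono_s F l' s' s _ hsub'
          apply ONSW_mono F s' l' ∅ _ ?_ hon'
          intro x hx hmem
          rcases hmem with h | h
          · exact h
          · exfalso
            have := hleaf x (hsub' hx) h
            exact hws' (this ▸ hx)
        · refine ⟨⟨u, hu, hadjuw.symm, ?_⟩, trivial⟩
          rintro ((h | h) | ⟨x, hx, h⟩)
          · exact h
          · exact F.irrefl h
          · have := hleaf x (hsub' (hl'mem x hx)) h.symm
            exact hws' (this ▸ hl'mem x hx)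

/-- Augmenting: adding an edge between two unmatched vertices. -/
lemma mtch_insert [DecidableEq V] {F : SimpleGraph V} {s : Finset V} {f : V → V} (hm : Mtch F s f)
    {u w : V} (hu : u ∉ s) (hw : w ∉ s) (hadj : F.Adj u w) :
    Mtch F (insert u (insert w s)) (fun x => if x = u then w else if x = w then u else f x) ∧
      (insert u (insert w s)).card = s.card + 2 := by
  classical
  have huw : u ≠ w := F.ne_of_adj hadj
  constructor
  · intro x hx
    dsimp only
    rcases Finset.mem_insert.mp hx with rfl | hx
    · exact ⟨by simpa using hadj, by simp, by simp [Ne.symm huw]⟩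
    rcases Finset.mem_insert.mp hx with rfl | hx
    · exact ⟨by simpa [Ne.symm huw] using hadj.symm, by simp [Ne.symm huw],
        by simp [Ne.symm huw]⟩
    · have hxu : x ≠ u := fun h => hu (h ▸ hx)
      have hxw : x ≠ w := fun h => hw (h ▸ hx)
      obtain ⟨a1, a2, a3⟩ := hm x hx
      have h1 : f x ≠ u := fun h => hu (h ▸ a2)
      have h2 : f x ≠ w := fun h => hw (h ▸ a2)
      refine ⟨?_, ?_, ?_⟩
      · simp only [if_neg hxu, if_neg hxw]; exact a1
      · simp only [if_neg hxu, if_neg hxw]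
        exact Finset.mem_insert_of_mem (Finset.mem_insert_of_mem a2)
      · simp only [if_neg hxu, if_neg hxw, if_neg h1, if_neg h2]; exact a3
  · rw [Finset.card_insert_of_notMem, Finset.card_insert_of_notMem hw]
    simp only [Finset.mem_insert]
    rintro (h | h)
    · exact huw h
    · exact hu h

/-- Exchanging along an alternating path of length two. -/
lemma mtch_swap [DecidableEq V] {F : SimpleGraph V} {s : Finset V} {f : V → V} (hm : Mtch F s f)
    {u b : V} (hu : u ∉ s) (hb : b ∈ s) (hadj : F.Adj u b) :
    Mtch F (insert u (s.erase (f b))) (fun x => if x = u then b else if x = b then u else f x) ∧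
      (insert u (s.erase (f b))).card = s.card ∧ f b ∉ insert u (s.erase (f b)) ∧
      f b ∈ s := by
  classical
  obtain ⟨hadjb, hfb, hffb⟩ := hm b hb
  have hbu : b ≠ u := fun h => hu (h ▸ hb)
  have hab : f b ≠ b := fun h => F.irrefl (h ▸ hadjb)
  have hau : f b ≠ u := fun h => hu (h ▸ hfb)
  refine ⟨?_, ?_, ?_, hfb⟩
  · intro x hx
    dsimp only
    rcases Finset.mem_insert.mp hx with rfl | hx
    · refine ⟨by simpa using hadj, ?_, by simp [hbu]⟩
      simp only [if_pos rfl]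
      exact Finset.mem_insert_of_mem (Finset.mem_erase.mpr ⟨Ne.symm hab, hb⟩)
    · have hxfb : x ≠ f b := (Finset.mem_erase.mp hx).1
      have hxs : x ∈ s := (Finset.mem_erase.mp hx).2
      have hxu : x ≠ u := fun h => hu (h ▸ hxs)
      by_cases hxb : x = b
      · subst hxb
        refine ⟨?_, ?_, ?_⟩
        · simp only [if_neg hxu, if_pos rfl]
          exact hadj.symm
        · simp only [if_neg hxu, if_pos rfl]
          exact Finset.mem_insert_self _ _
        · simp only [if_neg hxu, if_pos rfl]
          simp
      · obtain ⟨a1, a2, a3⟩ := hm x hxs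
        have h1 : f x ≠ u := fun h => hu (h ▸ a2)
        have h2 : f x ≠ b := fun h => hxfb (by rw [← a3, h])
        have h3 : f x ≠ f b := fun h => hxb (by rw [← a3, h, hffb])
        refine ⟨?_, ?_, ?_⟩
        · simp only [if_neg hxu, if_neg hxb]; exact a1
        · simp only [if_neg hxu, if_neg hxb]
          exact Finset.mem_insert_of_mem (Finset.mem_erase.mpr ⟨h3, a2⟩)
        · simp only [if_neg hxu, if_neg hxb, if_neg h1, if_neg h2]; exact a3
  · rw [Finset.card_insert_of_notMem, Finset.card_erase_of_mem hfb]
    · have : 1 ≤ s.card := Finset.card_pos.mpr ⟨b, hb⟩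
      omega
    · intro h
      exact hu ((Finset.mem_erase.mp h).2)
  · simp only [Finset.mem_insert, Finset.mem_erase]
    rintro (h | ⟨h, _⟩)
    · exact hau h
    · exact h rfl


/-- From an open neighborhood sequence, extract an injective system of "private"
neighbors. -/
lemma exists_inj_system [DecidableEq V] {F : SimpleGraph V} {l : List V}
    (h : IsOpenNbrSeq F l) :
    ∃ σ : V → V, (∀ v ∈ l.toFinset, F.Adj v (σ v)) ∧ Set.InjOn σ ↑l.toFinset := by
  classical
  obtain ⟨hnd, h2⟩ := h
  choose wf hw1 hw2 using h2
  have hidx : ∀ v, v ∈ l → ∃ i : Fin l.length, l.get i = v := fun v hv =>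
    List.mem_iff_get.mp hv
  refine ⟨fun v => if hv : v ∈ l then wf (hidx v hv).choose else v, ?_, ?_⟩
  · intro v hv
    rw [List.mem_toFinset] at hv
    simp only [dif_pos hv]
    have := hw1 (hidx v hv).choose
    rwa [(hidx v hv).choose_spec] at this
  · intro v1 hv1 v2 hv2 he
    rw [Finset.mem_coe, List.mem_toFinset] at hv1 hv2
    simp only [dif_pos hv1, dif_pos hv2] at he
    set i1 := (hidx v1 hv1).choose with hi1
    set i2 := (hidx v2 hv2).choose with hi2
    have hg1 : l.get i1 = v1 := (hidx v1 hv1).choose_spec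
    have hg2 : l.get i2 = v2 := (hidx v2 hv2).choose_spec
    have : i1 = i2 := by
      by_contra hne
      rcases Nat.lt_or_ge (i1 : ℕ) (i2 : ℕ) with hlt | hge
      · exact hw2 i2 i1 hlt (he ▸ hw1 i1)
      · have hlt : (i2 : ℕ) < (i1 : ℕ) := by
          rcases Nat.lt_or_ge (i2 : ℕ) (i1 : ℕ) with h | h
          · exact h
          · exact absurd (Fin.ext (by omega)) hne
        exact hw2 i1 i2 hlt (he.symm ▸ hw1 i2)
    rw [← hg1, ← hg2, this]

/-- A leaf: a vertex with a unique neighbor. -/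
def IsLf (F : SimpleGraph V) (v : V) : Prop := ∃ w, ∀ x, F.Adj v x ↔ x = w

lemma isLf_neighborSet {F : SimpleGraph V} {v w : V} (h : ∀ x, F.Adj v x ↔ x = w) :
    F.neighborSet v = {w} := by
  ext x
  simp only [mem_neighborSet, Set.mem_singleton_iff]
  exact h x

lemma isLf_iso {F : SimpleGraph V} (φ : F ≃g F) (v : V) : IsLf F (φ v) ↔ IsLf F v := by
  constructor
  · rintro ⟨w, hw⟩
    refine ⟨φ.symm w, fun x => ?_⟩
    rw [show F.Adj v x ↔ F.Adj (φ v) (φ x) from (φ.map_adj_iff).symm, hw (φ x)]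
    constructor
    · intro h
      have := congrArg φ.symm h
      simpa using this
    · intro h
      rw [h]
      simp
  · rintro ⟨w, hw⟩
    refine ⟨φ w, fun x => ?_⟩
    have : F.Adj (φ v) x ↔ F.Adj v (φ.symm x) := by
      rw [show F.Adj v (φ.symm x) ↔ F.Adj (φ v) (φ (φ.symm x)) from (φ.map_adj_iff).symm]
      simp
    rw [this, hw (φ.symm x)]
    constructor
    · intro h
      have := congrArg φ h
      simpa using this
    · intro h
      rw [h]
      simp


/-- State for the alternating-path walk: a maximum matching of card `N` together
with an exposed vertex `a` and a matched neighbor `b` of it. -/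
structure MtchSt {V : Type*} (T : SimpleGraph V) (N : ℕ) where
  s : Finset V
  f : V → V
  a : V
  b : V
  hm : Mtch T s f
  hcard : s.card = N
  ha : a ∉ s
  hb : b ∈ s
  hab : T.Adj a b

lemma forward_contradiction [Fintype V] [DecidableEq V] {T : SimpleGraph V}
    [DecidablePred (IsLf T)] (hforest : T.IsAcyclic) (hnoiso : ∀ v, ∃ w, T.Adj v w)
    (hnotwin : ∀ u v : V, u ≠ v → T.neighborSet u ≠ T.neighborSet v)
    (N : ℕ) (hmax : ∀ (t : Finset V) (g : V → V), Mtch T t g → t.card ≤ N)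
    (hLC : ∀ (s1 s2 : Finset V) (f1 f2 : V → V), Mtch T s1 f1 → Mtch T s2 f2 →
      s1.card = N → s2.card = N →
      (s1.filter (IsLf T)).card = (s2.filter (IsLf T)).card)
    {s₀ : Finset V} {f₀ : V → V} (hm₀ : Mtch T s₀ f₀) (hc₀ : s₀.card = N)
    {u : V} (hu : u ∉ s₀) : False := by
  classical
  have hnbr : ∀ (s : Finset V) (f : V → V), Mtch T s f → s.card = N → ∀ a, a ∉ s →
      ∀ b, T.Adj a b → b ∈ s := by
    intro s f hm hc a ha b hadj
    by_contra hb
    obtain ⟨hm', hc'⟩ := mtch_insert hm ha hb hadj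
    have h1 := hmax _ _ hm'
    omega
  -- exposed vertices of maximum matchings are not leaves
  have hexp : ∀ (s : Finset V) (f : V → V), Mtch T s f → s.card = N →
      ∀ a, a ∉ s → ¬ IsLf T a := by
    rintro s f hm hc a ha ⟨w, hw⟩
    have hadj : T.Adj a w := (hw w).mpr rfl
    have hws : w ∈ s := hnbr s f hm hc a ha w hadj
    obtain ⟨hm', hc', hout, hfbs⟩ := mtch_swap hm ha hws hadj
    set a' := f w with ha'
    set s' := insert a (s.erase a') with hs'
    have hcount := hLC s s' f _ hm hm' hc (by omega)
    have hpa : IsLf T a := ⟨w, hw⟩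
    have e1 : s'.filter (IsLf T) = insert a ((s.erase a').filter (IsLf T)) := by
      rw [hs', Finset.filter_insert, if_pos hpa]
    have e2 : (s.erase a').filter (IsLf T) = (s.filter (IsLf T)).erase a' := Finset.filter_erase _ _ _
    have hans' : a ∉ (s.erase a').filter (IsLf T) := fun h =>
      ha (Finset.mem_of_mem_erase (Finset.mem_of_mem_filter _ h))
    have hans'' : a ∉ (s.filter (IsLf T)).erase a' := by rw [← e2]; exact hans'
    have e3 : (s'.filter (IsLf T)).card = ((s.filter (IsLf T)).erase a').card + 1 := by
      rw [e1, e2]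
      exact Finset.card_insert_of_notMem hans''
    -- conclude p a'
    have hpa' : IsLf T a' := by
      by_contra hpa'
      have he : (s.filter (IsLf T)).erase a' = s.filter (IsLf T) := Finset.erase_eq_of_notMem
        (fun h => hpa' (Finset.mem_filter.mp h).2)
      rw [he] at e3
      omega
    -- a' is a leaf with unique neighbor w, as is a: open twins
    obtain ⟨w', hw'⟩ := hpa'
    have hadja'w : T.Adj a' w := ((hm w hws).1).symm
    have hww' : w = w' := (hw' w).mp hadja'w
    have haa' : a ≠ a' := fun h => ha (h ▸ hfbs)
    apply hnotwin a a' haa'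
    rw [isLf_neighborSet hw, isLf_neighborSet hw', hww']
  have havetwo : ∀ a, ¬ IsLf T a → ∀ b, T.Adj a b → ∃ b', T.Adj a b' ∧ b' ≠ b := by
    intro a hnl b hadj
    by_contra h
    push_neg at h
    exact hnl ⟨b, fun x => ⟨fun hx => h x hx, fun hx => hx ▸ hadj⟩⟩
  -- one step of the alternating walk
  have hstep : ∀ x : MtchSt T N, ∃ y : MtchSt T N,
      T.Adj x.a y.b ∧ y.b ≠ x.b ∧ y.a ∈ x.s := by
    intro x
    have hnl : ¬ IsLf T x.a := hexp x.s x.f x.hm x.hcard x.a x.ha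
    obtain ⟨b', hb'adj, hb'ne⟩ := havetwo x.a hnl x.b x.hab
    have hb's : b' ∈ x.s := hnbr x.s x.f x.hm x.hcard x.a x.ha b' hb'adj
    obtain ⟨hm', hc', hout, hfbs⟩ := mtch_swap x.hm x.ha hb's hb'adj
    have hb'fb' : b' ≠ x.f b' := ((x.hm b' hb's).1).ne
    refine ⟨⟨insert x.a (x.s.erase (x.f b')), _, x.f b', b', hm', ?_, hout, ?_, ?_⟩,
      hb'adj, hb'ne, hfbs⟩
    · rw [hc', x.hcard]
    · exact Finset.mem_insert_of_mem (Finset.mem_erase.mpr ⟨hb'fb', hb's⟩)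
    · exact ((x.hm b' hb's).1).symm
  -- iterate
  obtain ⟨b₀, hb₀adj⟩ := hnoiso u
  have hb₀s : b₀ ∈ s₀ := hnbr s₀ f₀ hm₀ hc₀ u hu b₀ hb₀adj
  set st₀ : MtchSt T N := ⟨s₀, f₀, u, b₀, hm₀, hc₀, hu, hb₀s, hb₀adj⟩ with hst₀
  set step : MtchSt T N → MtchSt T N := fun x => (hstep x).choose with hstepdef
  have hstep1 : ∀ x, T.Adj x.a (step x).b := fun x => (hstep x).choose_spec.1
  have hstep2 : ∀ x, (step x).b ≠ x.b := fun x => (hstep x).choose_spec.2.1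
  have hstep3 : ∀ x, (step x).a ∈ x.s := fun x => (hstep x).choose_spec.2.2
  set st : ℕ → MtchSt T N := fun n => step^[n] st₀ with hstdef
  have hst : ∀ n, st (n+1) = step (st n) := by
    intro n
    simp only [hstdef, Function.iterate_succ_apply']
  set seq : ℕ → V := fun n => if n % 2 = 0 then (st (n/2)).a else (st (n/2+1)).b with hseq
  apply no_nonbacktracking_walk hforest seq
  · intro n
    rcases Nat.even_or_odd n with ⟨k, hk⟩ | ⟨k, hk⟩
    · have e1 : seq n = (st k).a := by
        simp only [hseq]
        rw [if_pos (by omega), show n/2 = k by omega]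
      have e2 : seq (n+1) = (st (k+1)).b := by
        simp only [hseq]
        rw [if_neg (by omega), show (n+1)/2 = k by omega]
      rw [e1, e2, hst]
      exact hstep1 (st k)
    · have e1 : seq n = (st (k+1)).b := by
        simp only [hseq]
        rw [if_neg (by omega), show n/2 = k by omega]
      have e2 : seq (n+1) = (st (k+1)).a := by
        simp only [hseq]
        rw [if_pos (by omega), show (n+1)/2 = k+1 by omega]
      rw [e1, e2]
      exact (st (k+1)).hab.symm
  · intro n
    rcases Nat.even_or_odd n with ⟨k, hk⟩ | ⟨k, hk⟩
    · have e1 : seq n = (st k).a := by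
        simp only [hseq]
        rw [if_pos (by omega), show n/2 = k by omega]
      have e2 : seq (n+2) = (st (k+1)).a := by
        simp only [hseq]
        rw [if_pos (by omega), show (n+2)/2 = k+1 by omega]
      rw [e1, e2, hst]
      intro h
      exact (st k).ha (h ▸ hstep3 (st k))
    · have e1 : seq n = (st (k+1)).b := by
        simp only [hseq]
        rw [if_neg (by omega), show n/2 = k by omega]
      have e2 : seq (n+2) = (st (k+2)).b := by
        simp only [hseq]
        rw [if_neg (by omega), show (n+2)/2 = k+1 by omega]
      rw [e1, e2, hst (k+1)]
      exact hstep2 (st (k+1))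


end Aux

/-- A finite forest with no isolated vertices and no open twins is an iso-unique Grundy
total domination graph iff its Grundy total domination number equals its number of
vertices. -/
theorem isoUniqueGrundyTotalDom_forest_iff {V : Type*} [Fintype V] (T : SimpleGraph V)
    (hforest : T.IsAcyclic)
    (hnoiso : ∀ v : V, ∃ w : V, T.Adj v w)
    (hnotwin : ∀ u v : V, u ≠ v → T.neighborSet u ≠ T.neighborSet v) :
    IsoUniqueGrundyTotalDom T ↔ grundyTotalNum T = Fintype.card V := by
  classical
  obtain ⟨s₀, hs₀mem, hmax⟩ : ∃ s : Finset V, (∃ f, Mtch T s f) ∧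
      ∀ t : Finset V, (∃ f, Mtch T t f) → t.card ≤ s.card := by
    obtain ⟨s, hs, hm⟩ := Finset.exists_max_image
      ((Finset.univ : Finset (Finset V)).filter (fun s => ∃ f, Mtch T s f))
      Finset.card ⟨∅, Finset.mem_filter.mpr ⟨Finset.mem_univ _, id, mtch_empty T⟩⟩
    exact ⟨s, (Finset.mem_filter.mp hs).2, fun t ht =>
      hm t (Finset.mem_filter.mpr ⟨Finset.mem_univ _, ht⟩)⟩
  obtain ⟨f₀, hm₀⟩ := hs₀mem
  have hmax' : ∀ (t : Finset V) (g : V → V), Mtch T t g → t.card ≤ s₀.card :=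
    fun t g h => hmax t ⟨g, h⟩
  have hub : ∀ l : List V, IsOpenNbrSeq T l → l.length ≤ s₀.card := by
    intro l hl
    obtain ⟨σ, hadj, hinj⟩ := exists_inj_system hl
    obtain ⟨s, f, hm, _, hcard⟩ := matching_of_inj_system hforest l.toFinset.card
      l.toFinset σ le_rfl (fun v hv => hadj v hv) hinj
    have h1 : l.toFinset.card = l.length := List.toFinset_card_of_nodup hl.1
    have h2 := hmax' s f hm
    omega
  obtain ⟨l₀, hnd₀, htf₀, hon₀⟩ := mtch_seq hforest s₀.card s₀ f₀ le_rfl hm₀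
  have hl₀ : IsOpenNbrSeq T l₀ := isOpenNbrSeq_of_ONSW T s₀ l₀ hnd₀ hon₀
  have hlen₀ : l₀.length = s₀.card := by
    rw [← List.toFinset_card_of_nodup hnd₀, htf₀]
  have hγ : grundyTotalNum T = s₀.card := by
    have hKne : ({k : ℕ | ∃ l : List V, IsOpenNbrSeq T l ∧ l.length = k}).Nonempty :=
      ⟨l₀.length, l₀, hl₀, rfl⟩
    have hKbdd : s₀.card ∈
        upperBounds {k : ℕ | ∃ l : List V, IsOpenNbrSeq T l ∧ l.length = k} := by
      rintro k ⟨l, hl, rfl⟩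
      exact hub l hl
    unfold grundyTotalNum
    exact le_antisymm (csSup_le hKne hKbdd) (le_csSup ⟨s₀.card, hKbdd⟩ ⟨l₀, hl₀, hlen₀⟩)
  have hgseq : ∀ l, IsOpenNbrSeq T l → l.length = s₀.card → IsGrundyTotalDomSeq T l :=
    fun l h hlen => ⟨h, fun l' h' => by rw [hlen]; exact hub l' h'⟩
  constructor
  · intro hiso
    by_contra hne
    have hne' : s₀.card ≠ Fintype.card V := fun h => hne (by rw [hγ, h])
    obtain ⟨u, hu⟩ : ∃ u, u ∉ s₀ := by
      by_contra h
      push_neg at h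
      have : s₀ = Finset.univ := Finset.eq_univ_iff_forall.mpr h
      exact hne' (by rw [this, Finset.card_univ])
    have hgset : ∀ (s : Finset V) (f : V → V), Mtch T s f → s.card = s₀.card →
        IsGrundyTotalDomSet T ↑s := by
      intro s f hm hc
      obtain ⟨l, hnd, htf, hon⟩ := mtch_seq hforest s₀.card s f (le_of_eq hc) hm
      refine ⟨l, hgseq l (isOpenNbrSeq_of_ONSW T s l hnd hon) ?_, ?_⟩
      · rw [← List.toFinset_card_of_nodup hnd, htf, hc]
      · ext v
        simp only [Set.mem_setOf_eq, Finset.mem_coe, ← List.mem_toFinset, htf]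
    have hLC : ∀ (s1 s2 : Finset V) (f1 f2 : V → V), Mtch T s1 f1 → Mtch T s2 f2 →
        s1.card = s₀.card → s2.card = s₀.card →
        (s1.filter (IsLf T)).card = (s2.filter (IsLf T)).card := by
      intro s1 s2 f1 f2 hm1 hm2 hc1 hc2
      obtain ⟨φ, hφ⟩ := hiso ↑s1 ↑s2 (hgset s1 f1 hm1 hc1) (hgset s2 f2 hm2 hc2)
      apply Finset.card_bij (fun x _ => φ x)
      · intro x hx
        obtain ⟨hx1, hx2⟩ := Finset.mem_filter.mp hx
        refine Finset.mem_filter.mpr ⟨?_, (isLf_iso φ x).mpr hx2⟩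
        have : (φ x : V) ∈ (↑s2 : Set V) := by
          rw [← hφ]
          exact ⟨x, Finset.mem_coe.mpr hx1, rfl⟩
        exact_mod_cast this
      · intro x hx y hy hxy
        exact φ.injective hxy
      · intro y hy
        obtain ⟨hy1, hy2⟩ := Finset.mem_filter.mp hy
        have : (y : V) ∈ ⇑φ '' ↑s1 := by
          rw [hφ]
          exact Finset.mem_coe.mpr hy1
        obtain ⟨x, hx, hxy⟩ := this
        refine ⟨x, Finset.mem_filter.mpr ⟨Finset.mem_coe.mp hx, ?_⟩, hxy⟩
        exact (isLf_iso φ x).mp (by rw [hxy]; exact hy2)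
    exact forward_contradiction hforest hnoiso hnotwin s₀.card hmax' hLC hm₀ rfl hu
  · intro hcard A B hA hB
    have hN : s₀.card = Fintype.card V := by rw [← hγ, hcard]
    have huniv : ∀ C, IsGrundyTotalDomSet T C → C = Set.univ := by
      rintro C ⟨l, ⟨hl, hml⟩, hset⟩
      have h2 : s₀.card ≤ l.length := hlen₀ ▸ hml l₀ hl₀
      have hlen : l.length = Fintype.card V := le_antisymm (hN ▸ hub l hl) (hN ▸ h2)
      have htf : l.toFinset = Finset.univ := Finset.eq_univ_of_card _
        (by rw [List.toFinset_card_of_nodup hl.1, hlen])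
      rw [← hset]
      ext v
      simp [← List.mem_toFinset, htf]
    rw [huniv A hA, huniv B hB]
    refine ⟨RelIso.refl _, ?_⟩
    simp
end

section
/- If G is a finite simple graph and x is an arbitrary vertex of G, then there exists an L-Grundy dominating sequence of G (that is, an L-sequence of maximum length) whose set of vertices contains x. -/
/-- An L-sequence in `G`: a list of distinct vertices such that each vertex has a vertex
in its closed neighborhood which is not in the open neighborhood of any earlier
vertex. -/
def IsLSeq {V : Type*} (G : SimpleGraph V) (l : List V) : Prop :=
  l.Nodup ∧ ∀ i : Fin l.length, ∃ w : V, (w = l.get i ∨ G.Adj (l.get i) w) ∧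
    ∀ j : Fin l.length, (j : ℕ) < (i : ℕ) → ¬ G.Adj (l.get j) w

/-- The L-Grundy domination number of `G`: the maximum length of an L-sequence. -/
noncomputable def grundyLNum {V : Type*} (G : SimpleGraph V) : ℕ :=
  sSup {k : ℕ | ∃ l : List V, IsLSeq G l ∧ l.length = k}

/-- An L-Grundy dominating sequence: an L-sequence of maximum length. -/
def IsLGrundyDomSeq {V : Type*} (G : SimpleGraph V) (l : List V) : Prop :=
  IsLSeq G l ∧ ∀ l' : List V, IsLSeq G l' → l'.length ≤ l.length

/-- An L-Grundy dominating set of `G`: the set of vertices of some L-Grundy dominating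
sequence of `G`. -/
def IsLGrundyDomSet {V : Type*} (G : SimpleGraph V) (A : Set V) : Prop :=
  ∃ l : List V, IsLGrundyDomSeq G l ∧ {v : V | v ∈ l} = A

lemma isLSeq_iff {V : Type*} (G : SimpleGraph V) (l : List V) :
    IsLSeq G l ↔ l.Nodup ∧ ∀ i, (hi : i < l.length) → ∃ w : V,
      (w = l[i] ∨ G.Adj l[i] w) ∧
      ∀ j, (hj : j < l.length) → j < i → ¬ G.Adj l[j] w := by
  constructor
  · rintro ⟨h1, h2⟩
    refine ⟨h1, fun i hi => ?_⟩
    obtain ⟨w, hw1, hw2⟩ := h2 ⟨i, hi⟩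
    exact ⟨w, by simpa using hw1, fun j hj hji => by simpa using hw2 ⟨j, hj⟩ hji⟩
  · rintro ⟨h1, h2⟩
    refine ⟨h1, fun i => ?_⟩
    obtain ⟨w, hw1, hw2⟩ := h2 i.1 i.2
    exact ⟨w, by simpa using hw1, fun j hj => by simpa using hw2 j.1 j.2 hj⟩

lemma descent {V : Type*} (G : SimpleGraph V) (l : List V) (hl : IsLSeq G l)
    (x : V) (hx : x ∉ l) :
    ∀ n i, i < l.length → l.length - i ≤ n →
      (∃ w : V, (w = x ∨ G.Adj x w) ∧
        ∀ j, (hj : j < l.length) → j < i → ¬ G.Adj l[j] w) →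
      ∃ l', IsLSeq G l' ∧ l'.length = l.length ∧ x ∈ l' := by
  rw [isLSeq_iff] at hl
  obtain ⟨hnd, hwit⟩ := hl
  intro n
  induction n with
  | zero => intro i hi hle _; omega
  | succ n ih =>
    intro i hi hle hW
    obtain ⟨w, hw1, hw2⟩ := hW
    set l' := l.set i x with hl'def
    have hlen : l'.length = l.length := List.length_set ..
    have hndl' : l'.Nodup := hnd.set hx
    have hgeti : l'[i]'(hlen ▸ hi) = x := List.getElem_set_self _
    have hxl' : x ∈ l' := hgeti ▸ List.getElem_mem _
    have hget : ∀ j, (hj : j < l.length) → j ≠ i → l'[j]'(by omega) = l[j] :=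
      fun j hj hji => List.getElem_set_ne (Ne.symm hji) _
    by_cases hLS : IsLSeq G l'
    · exact ⟨l', hLS, hlen, hxl'⟩
    · -- find failing index r
      rw [isLSeq_iff] at hLS
      push_neg at hLS
      obtain ⟨r, hr0, hfail⟩ := hLS hndl'
      have hr : r < l.length := by omega
      -- r cannot be < i
      have hri : ¬ r < i := by
        intro hlt
        obtain ⟨u, hu1, hu2⟩ := hwit r hr
        obtain ⟨j, hj, hji, hadj⟩ := hfail u (by
          rw [hget r hr (by omega)]; exact hu1)
        rw [hlen] at hj
        exact hu2 j hj hji (by rwa [hget j hj (by omega)] at hadj)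
      -- r cannot be = i
      have hrne : r ≠ i := by
        intro heq
        subst heq
        obtain ⟨j, hj, hji, hadj⟩ := hfail w (by rw [hgeti]; exact hw1)
        rw [hlen] at hj
        exact hw2 j hj hji (by rwa [hget j hj (by omega)] at hadj)
      have hir : i < r := by omega
      -- get S-witness at r, it must be adjacent to x
      obtain ⟨u, hu1, hu2⟩ := hwit r hr
      obtain ⟨j, hj, hji, hadj⟩ := hfail u (by
        rw [hget r hr (by omega)]; exact hu1)
      rw [hlen] at hj
      have hji' : j = i := by
        by_contra hne
        exact hu2 j hj hji (by rwa [hget j hj hne] at hadj)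
      subst hji'
      rw [hgeti] at hadj
      -- hadj : G.Adj x u ; recurse at r
      exact ih r hr (by omega) ⟨u, Or.inr hadj, fun j hj hjr => hu2 j hj hjr⟩

private theorem exists_aux {V : Type*} [Fintype V] (G : SimpleGraph V)
    (x : V) :
    ∃ l : List V, (IsLSeq G l ∧ ∀ l' : List V, IsLSeq G l' → l'.length ≤ l.length) ∧ x ∈ l := by
  classical
  set M : Set ℕ := {k : ℕ | ∃ l : List V, IsLSeq G l ∧ l.length = k} with hM
  have hxseq : IsLSeq G [x] := by
    refine ⟨by simp, fun i => ⟨x, Or.inl ?_, fun j hj => ?_⟩⟩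
    · simp [List.getElem_singleton]
    · have h2 := j.2; have h1 := i.2
      simp only [List.length_singleton] at h1 h2
      omega
  have hne : M.Nonempty := ⟨1, [x], hxseq, rfl⟩
  have hbdd : BddAbove M := by
    refine ⟨Fintype.card V, fun k hk => ?_⟩
    obtain ⟨l, hl, rfl⟩ := hk
    exact hl.1.length_le_card
  obtain ⟨l, hl, hlen⟩ := Nat.sSup_mem hne hbdd
  have hmax : ∀ l' : List V, IsLSeq G l' → l'.length ≤ l.length := by
    intro l' hl'
    rw [hlen]
    exact le_csSup hbdd ⟨l', hl', rfl⟩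
  by_cases hxl : x ∈ l
  · exact ⟨l, ⟨hl, hmax⟩, hxl⟩
  · have hpos : 0 < l.length := by
      have : 1 ≤ sSup M := le_csSup hbdd ⟨[x], hxseq, rfl⟩
      omega
    obtain ⟨l', hl', hlen', hxl'⟩ := descent G l hl x hxl l.length 0 hpos (by omega)
      ⟨x, Or.inl rfl, fun j hj hj0 => absurd hj0 (by omega)⟩
    exact ⟨l', ⟨hl', fun l'' h => (hmax l'' h).trans hlen'.ge⟩, hxl'⟩


/-- For every vertex `x` of a finite graph `G` there exists an L-Grundy dominating
sequence of `G` containing `x`. -/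
theorem exists_LGrundyDomSeq_containing {V : Type*} [Fintype V] (G : SimpleGraph V)
    (x : V) :
    ∃ l : List V, IsLGrundyDomSeq G l ∧ x ∈ l :=
  exists_aux G x
end
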